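/- arXiv:2303.15717 — 5 statements merged into one kernel-verified Lean document; each statement's English description precedes it below -/
import Mathlib

section
/- Let X be a complex Banach space and L(X) the Banach algebra of bounded linear operators on X. Let M = [[A, B], [C, D]] ∈ M₂(L(X)) and suppose A and D have strongly Drazin inverses. If BD = 0 and D^π C = 0, where D^π = I − D·D^D and D^D is the Drazin inverse of D, then M has a Hirano inverse in M₂(L(X)). -/
set_option maxHeartbeats 1000000

/-- `a` has a Hirano inverse: there exists `z` with `az = za`, `z = zaz`,
and `a^2 - az` nilpotent. -/
def HasHiranoInverse {R : Type*} [Ring R] (a : R) : Prop :=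
  ∃ z : R, a * z = z * a ∧ z = z * a * z ∧ IsNilpotent (a ^ 2 - a * z)

/-- `a` has a strongly Drazin inverse: there exists `z` with `az = za`, `z = zaz`,
and `a - az` nilpotent. -/
def HasStronglyDrazinInverse {R : Type*} [Ring R] (a : R) : Prop :=
  ∃ z : R, a * z = z * a ∧ z = z * a * z ∧ IsNilpotent (a - a * z)

open Polynomial

section General
variable {R : Type*} [Ring R]

private lemma nilp_add_ann {u v : R} (hu : IsNilpotent u) (h : v * (u + v) = 0) :
    IsNilpotent (u + v) := by
  obtain ⟨n, hn⟩ := hu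
  have key : ∀ k : ℕ, (u + v) ^ (k + 1) = u ^ k * (u + v) := by
    intro k
    induction k with
    | zero => rw [pow_one, pow_zero, one_mul]
    | succ k ih =>
        rw [pow_succ, ih, mul_assoc, add_mul, h, add_zero, ← mul_assoc, ← pow_succ]
  exact ⟨n + 1, by rw [key n, hn, zero_mul]⟩

private lemma commute_aeval {x b : R} (h : Commute x b) (p : ℤ[X]) :
    Commute x (aeval b p) := by
  induction p using Polynomial.induction_on with
  | C a => simpa using (Int.cast_commute a x).symm
  | add p q hp hq => simpa [map_add] using hp.add_right hq
  | monomial n a _ =>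
      simpa [mul_assoc] using ((Int.cast_commute a x).symm).mul_right (h.pow_right (n + 1))

private lemma poly_div (n : ℕ) :
    ∃ h : ℤ[X], (1 : ℤ[X]) - X ^ (n + 1) - (1 - X) ^ (n + 1) = (X - X ^ 2) * h := by
  induction n with
  | zero => exact ⟨0, by ring⟩
  | succ n ih =>
      obtain ⟨h, hh⟩ := ih
      exact ⟨h + X ^ n + (1 - X) ^ n, by linear_combination hh⟩

private lemma nilp_sub_sq {a e : R} (hee : e * e = e) (hea : e * a = a * e)
    (hn : IsNilpotent (a - e)) : IsNilpotent (a - a ^ 2) := by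
  have key : a - a ^ 2 = (a - e) * (1 - e - a) := by
    have h1 : (a - e) * (1 - e - a) = a - a ^ 2 - e + e * e + (e * a - a * e) := by
      noncomm_ring
    rw [h1, hee, hea]; abel
  have c1 : Commute e a := hea
  have hcom : Commute (a - e) (1 - e - a) :=
    Commute.sub_right (Commute.sub_right (Commute.one_right _)
      (Commute.sub_left c1.symm (Commute.refl e)))
      (Commute.sub_left (Commute.refl a) c1)
  rw [key]
  exact hcom.isNilpotent_mul_right hn

private lemma nilp_sub_cube {a : R} (h : IsNilpotent (a - a ^ 2)) :
    IsNilpotent (a - a ^ 3) := by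
  have key : a - a ^ 3 = (a - a ^ 2) * (1 + a) := by noncomm_ring
  have hcom : Commute (a - a ^ 2) (1 + a) :=
    Commute.add_right (Commute.one_right _)
      (Commute.sub_left (Commute.refl a) ((Commute.refl a).pow_left 2))
  rw [key]
  exact hcom.isNilpotent_mul_right h

private lemma sd_construction {b : R} (hb : IsNilpotent (b - b ^ 2)) :
    ∃ w : R, b * w = w * b ∧ w = w * b * w ∧ IsNilpotent (b - b * w) ∧
      ∀ x : R, Commute x b → Commute x w := by
  obtain ⟨n, hn⟩ := hb
  have hsm : (b - b ^ 2) ^ (n + 1) = 0 := by rw [pow_succ, hn, zero_mul]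
  have hsnil : IsNilpotent (b - b ^ 2) := ⟨n + 1, hsm⟩
  obtain ⟨p, hp⟩ := poly_div n
  set H := (aeval b) p with hH
  clear_value H
  have hF : (1 : R) - b ^ (n + 1) - (1 - b) ^ (n + 1) = (b - b ^ 2) * H := by
    have h0 := congrArg (aeval b) hp
    rw [hH]
    simpa using h0
  have hsb : Commute (b - b ^ 2) b :=
    Commute.sub_left (Commute.refl b) ((Commute.refl b).pow_left 2)
  have hFnil : IsNilpotent ((1 : R) - b ^ (n + 1) - (1 - b) ^ (n + 1)) := by
    rw [hF, hH]
    exact (commute_aeval hsb p).isNilpotent_mul_right hsnil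
  set v : R := b ^ (n + 1) + (1 - b) ^ (n + 1) with hv
  clear_value v
  have hvF : v = 1 - ((1 : R) - b ^ (n + 1) - (1 - b) ^ (n + 1)) := by rw [hv]; abel
  have hvu : IsUnit v := by rw [hvF]; exact hFnil.isUnit_one_sub
  obtain ⟨vu, hvu_eq⟩ := hvu
  set vi : R := ((vu⁻¹ : Rˣ) : R) with hvi
  clear_value vi
  have hvvi : v * vi = 1 := by rw [← hvu_eq, hvi]; exact_mod_cast vu.mul_inv
  have hcomv : ∀ x : R, Commute x b → Commute x v := by
    intro x hx
    rw [hv]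
    exact Commute.add_right (hx.pow_right (n + 1))
      ((Commute.sub_right (Commute.one_right x) hx).pow_right (n + 1))
  have hcomvi : ∀ x : R, Commute x b → Commute x vi := by
    intro x hx
    have h9 : Commute x (vu : R) := by rw [hvu_eq]; exact hcomv x hx
    rw [hvi]
    exact h9.units_inv_right
  have hcb1b : Commute b (1 - b) := Commute.sub_right (Commute.one_right b) (Commute.refl b)
  have hkey0 : b ^ (n + 1) * (1 - b) ^ (n + 1) = 0 := by
    rw [← hcb1b.mul_pow]
    have : b * (1 - b) = b - b ^ 2 := by noncomm_ring
    rw [this, hsm]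
  set e : R := b ^ (n + 1) * vi with he
  clear_value e
  have hcome : ∀ x : R, Commute x b → Commute x e := by
    intro x hx
    rw [he]
    exact (hx.pow_right (n + 1)).mul_right (hcomvi x hx)
  have hbe : Commute b e := hcome b (Commute.refl b)
  have hswap : b ^ (n + 1) * vi = vi * b ^ (n + 1) :=
    hcomvi (b ^ (n + 1)) ((Commute.refl b).pow_left (n + 1))
  have hbb : b ^ (n + 1) * b ^ (n + 1) = b ^ (n + 1) * v := by
    rw [hv, mul_add, hkey0, add_zero]
  have hee : e * e = e := by
    calc e * e = b ^ (n + 1) * (vi * b ^ (n + 1)) * vi := by rw [he]; noncomm_ring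
      _ = b ^ (n + 1) * (b ^ (n + 1) * vi) * vi := by rw [← hswap]
      _ = (b ^ (n + 1) * v) * (vi * vi) := by rw [← hbb]; noncomm_ring
      _ = b ^ (n + 1) * ((v * vi) * vi) := by noncomm_ring
      _ = e := by rw [hvvi, one_mul, he]
  have h1e : (1 : R) - e = (1 - b) ^ (n + 1) * vi := by
    calc (1 : R) - e = v * vi - b ^ (n + 1) * vi := by rw [hvvi, he]
      _ = (1 - b) ^ (n + 1) * vi := by rw [hv]; noncomm_ring
  -- b - b*e is nilpotent
  have ht1 : b - b * e = (b - b ^ 2) * ((1 - b) ^ n * vi) := by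
    have e1 : b - b * e = b * (1 - e) := by noncomm_ring
    rw [e1, h1e, pow_succ']
    have : b * ((1 - b) * (1 - b) ^ n * vi) = (b * (1 - b)) * ((1 - b) ^ n * vi) := by
      noncomm_ring
    rw [this]
    have : b * (1 - b) = b - b ^ 2 := by noncomm_ring
    rw [this]
  have hs1b : Commute (b - b ^ 2) ((1 - b) ^ n * vi) :=
    ((Commute.sub_right (Commute.one_right _) hsb).pow_right n).mul_right
      (hcomvi _ hsb)
  have ht1nil : IsNilpotent (b - b * e) := by
    rw [ht1]; exact hs1b.isNilpotent_mul_right hsnil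
  have ht2 : e - b * e = (b - b ^ 2) * (b ^ n * vi) := by
    have e1 : e - b * e = (1 - b) * e := by noncomm_ring
    rw [e1, he, pow_succ']
    have : (1 - b) * (b * b ^ n * vi) = ((1 - b) * b) * (b ^ n * vi) := by noncomm_ring
    rw [this]
    have : (1 - b) * b = b - b ^ 2 := by noncomm_ring
    rw [this]
  have hsbn : Commute (b - b ^ 2) (b ^ n * vi) :=
    (hsb.pow_right n).mul_right (hcomvi _ hsb)
  have ht2nil : IsNilpotent (e - b * e) := by
    rw [ht2]; exact hsbn.isNilpotent_mul_right hsnil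
  have hbenil : IsNilpotent (b - e) := by
    have heq : b - e = (b - b * e) + (-(e - b * e)) := by abel
    have hcom : Commute (b - b * e) (-(e - b * e)) := by
      have c1 : Commute b e := hbe
      have c2 : Commute (b - b * e) e :=
        Commute.sub_left c1 (Commute.mul_left c1 (Commute.refl e))
      have c3 : Commute (b - b * e) b :=
        Commute.sub_left (Commute.refl b) (Commute.mul_left (Commute.refl b) c1.symm)
      exact (Commute.sub_right c2 (Commute.mul_right c3 c2)).neg_right
    rw [heq]
    exact hcom.isNilpotent_add ht1nil ht2nil.neg
  -- the corner inverse
  have htau_nil : IsNilpotent (e - b * e) := ht2nil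
  have huu : IsUnit (1 - (e - b * e)) := htau_nil.isUnit_one_sub
  obtain ⟨uu, huu_eq⟩ := huu
  set ui : R := ((uu⁻¹ : Rˣ) : R) with hui
  clear_value ui
  have hui1 : (1 - (e - b * e)) * ui = 1 := by
    rw [← huu_eq, hui]; exact_mod_cast uu.mul_inv
  have hcomtau : ∀ x : R, Commute x b → Commute x (e - b * e) := fun x hx =>
    Commute.sub_right (hcome x hx) (hx.mul_right (hcome x hx))
  have hcomui : ∀ x : R, Commute x b → Commute x ui := by
    intro x hx
    have : Commute x (uu : R) := by
      rw [huu_eq]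
      exact Commute.sub_right (Commute.one_right x) (hcomtau x hx)
    rw [hui]
    exact this.units_inv_right
  refine ⟨e * ui, ?_, ?_, ?_, ?_⟩
  rotate_right
  · exact fun x hx => (hcome x hx).mul_right (hcomui x hx)
  · -- b * (e * ui) = (e * ui) * b
    exact (hbe.mul_right (hcomui b (Commute.refl b))).eq
  · -- e * ui = (e * ui) * b * (e * ui)
    have hetau : e * (1 - (e - b * e)) = b * e := by
      have expand : e * (1 - (e - b * e)) = e - e * e + e * (b * e) := by noncomm_ring
      have h2 : e * (b * e) = b * e := by
        calc e * (b * e) = (e * b) * e := by rw [mul_assoc]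
          _ = (b * e) * e := by rw [hbe.symm.eq]
          _ = b * (e * e) := by rw [mul_assoc]
          _ = b * e := by rw [hee]
      rw [expand, hee, h2]; abel
    have hbw : b * (e * ui) = e := by
      calc b * (e * ui) = (b * e) * ui := by rw [mul_assoc]
        _ = (e * (1 - (e - b * e))) * ui := by rw [hetau]
        _ = e * ((1 - (e - b * e)) * ui) := by rw [mul_assoc]
        _ = e := by rw [hui1, mul_one]
    have hwb : (e * ui) * b = e := by
      rw [← (hbe.mul_right (hcomui b (Commute.refl b))).eq, hbw]
    calc e * ui = (e * e) * ui := by rw [hee]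
      _ = e * (e * ui) := by rw [mul_assoc]
      _ = ((e * ui) * b) * (e * ui) := by rw [hwb]
  · -- IsNilpotent (b - b * (e * ui))
    have hbw : b * (e * ui) = e := by
      have hetau : e * (1 - (e - b * e)) = b * e := by
        have expand : e * (1 - (e - b * e)) = e - e * e + e * (b * e) := by noncomm_ring
        have h2 : e * (b * e) = b * e := by
          calc e * (b * e) = (e * b) * e := by rw [mul_assoc]
            _ = (b * e) * e := by rw [hbe.symm.eq]
            _ = b * (e * e) := by rw [mul_assoc]
            _ = b * e := by rw [hee]
        rw [expand, hee, h2]; abel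
      calc b * (e * ui) = (b * e) * ui := by rw [mul_assoc]
        _ = (e * (1 - (e - b * e))) * ui := by rw [hetau]
        _ = e * ((1 - (e - b * e)) * ui) := by rw [mul_assoc]
        _ = e := by rw [hui1, mul_one]
    rw [hbw]
    exact hbenil

private lemma hirano_of_nilpotent {a : R} (h : IsNilpotent (a - a ^ 3)) :
    HasHiranoInverse a := by
  have hb : IsNilpotent (a ^ 2 - (a ^ 2) ^ 2) := by
    have key : a ^ 2 - (a ^ 2) ^ 2 = (a - a ^ 3) * a := by noncomm_ring
    rw [key]
    exact (Commute.sub_left (Commute.refl a) ((Commute.refl a).pow_left 3)).isNilpotent_mul_right h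
  obtain ⟨w, hwc, hw, hwn, hcom⟩ := sd_construction hb
  have haw : Commute a w := hcom a ((Commute.refl a).pow_right 2)
  refine ⟨a * w, ?_, ?_, ?_⟩
  · rw [mul_assoc, haw.eq]
  · calc a * w = a * (w * a ^ 2 * w) := by rw [← hw]
      _ = a * w * a * (a * w) := by noncomm_ring
  · have key : a ^ 2 - a * (a * w) = a ^ 2 - a ^ 2 * w := by noncomm_ring
    rw [key]
    exact hwn

private lemma add_fin_two' (a b c d e f g h : R) :
    (!![a, b; c, d] + !![e, f; g, h] : Matrix (Fin 2) (Fin 2) R) = !![a + e, b + f; c + g, d + h] := by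
  ext i j; fin_cases i <;> fin_cases j <;> simp

private lemma sub_fin_two' (a b c d e f g h : R) :
    (!![a, b; c, d] - !![e, f; g, h] : Matrix (Fin 2) (Fin 2) R) = !![a - e, b - f; c - g, d - h] := by
  ext i j; fin_cases i <;> fin_cases j <;> simp

private lemma eq_fin_two {a b c d a' b' c' d' : R} (h1 : a = a') (h2 : b = b')
    (h3 : c = c') (h4 : d = d') :
    (!![a, b; c, d] : Matrix (Fin 2) (Fin 2) R) = !![a', b'; c', d'] := by
  rw [h1, h2, h3, h4]

private lemma zero_fin_two' : (0 : Matrix (Fin 2) (Fin 2) R) = !![0, 0; 0, 0] := by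
  ext i j; fin_cases i <;> fin_cases j <;> simp

private lemma tri_nilpotent {x y c : R} (hx : IsNilpotent x) (hy : IsNilpotent y) :
    IsNilpotent (!![x, 0; c, y] : Matrix (Fin 2) (Fin 2) R) := by
  obtain ⟨n, hn⟩ := hx
  obtain ⟨k, hk⟩ := hy
  have hxN : x ^ (n + k) = 0 := by rw [pow_add, hn, zero_mul]
  have hyN : y ^ (n + k) = 0 := by rw [pow_add, hk, mul_zero]
  have key : ∀ j : ℕ, ∃ cj : R, (!![x, 0; c, y] : Matrix (Fin 2) (Fin 2) R) ^ j
      = !![x ^ j, 0; cj, y ^ j] := by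
    intro j
    induction j with
    | zero => exact ⟨0, by rw [pow_zero, pow_zero, pow_zero, Matrix.one_fin_two]⟩
    | succ j ih =>
        obtain ⟨cj, hcj⟩ := ih
        refine ⟨cj * x + y ^ j * c, ?_⟩
        rw [pow_succ, hcj, Matrix.mul_fin_two]
        simp [pow_succ]
  obtain ⟨cN, hcN⟩ := key (n + k)
  refine ⟨(n + k) + (n + k), ?_⟩
  rw [pow_add, hcN, hxN, hyN, Matrix.mul_fin_two, zero_fin_two']
  simp


end General

variable {X : Type*} [NormedAddCommGroup X] [NormedSpace ℂ X] [CompleteSpace X]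

theorem hirano_perturb_cor28 (A B C D DD : X →L[ℂ] X)
    (hA : HasStronglyDrazinInverse A)
    (hDD : D * DD = DD * D ∧ DD = DD * D * DD ∧ IsNilpotent (D - D * DD))
    (h1 : B * D = 0)
    (h2 : (1 - D * DD) * C = 0) :
    HasHiranoInverse (!![A, B; C, D] : Matrix (Fin 2) (Fin 2) (X →L[ℂ] X)) := by
  obtain ⟨zA, hAc, hAz, hAn⟩ := hA
  obtain ⟨hDc, hDz, hDn⟩ := hDD
  -- scalar facts
  have hee : (D * DD) * (D * DD) = (D * DD) := by
    calc (D * DD) * (D * DD) = D * (DD * D * DD) := by noncomm_ring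
      _ = (D * DD) := by rw [← hDz]
  have heD : (D * DD) * D = D * (D * DD) := by rw [mul_assoc, ← hDc]
  have heC : C = (D * DD) * C := by
    have h2' : C - (D * DD) * C = 0 := by
      have h2'' := h2
      rwa [sub_mul, one_mul] at h2''
    exact sub_eq_zero.mp h2'
  have hBe : B * (D * DD) = 0 := by rw [← mul_assoc, h1, zero_mul]
  have hBC : B * C = 0 := by
    have h3 : B * C = B * ((D * DD) * C) := congrArg (fun t => B * t) heC
    rw [h3, ← mul_assoc, hBe, zero_mul]
  have hBD' : B * (D * (D * DD)) = 0 := by rw [← mul_assoc, h1, zero_mul]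
  have cED : Commute (D * DD) D := heD
  -- nilpotency of A - A^3
  have hAee : (A * zA) * (A * zA) = A * zA := by
    calc (A * zA) * (A * zA) = A * (zA * A * zA) := by noncomm_ring
      _ = A * zA := by rw [← hAz]
  have hAea : (A * zA) * A = A * (A * zA) := by rw [mul_assoc, ← hAc]
  have hA2 : IsNilpotent (A - A ^ 2) := nilp_sub_sq hAee hAea hAn
  have hA3 : IsNilpotent (A - A ^ 3) := nilp_sub_cube hA2
  have hD2 : IsNilpotent (D - D ^ 2) := nilp_sub_sq hee heD hDn
  -- D' facts
  have hD'sq : (D * (D * DD)) * (D * (D * DD)) = D * D * (D * DD) := by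
    calc (D * (D * DD)) * (D * (D * DD)) = D * ((D * DD) * D) * (D * DD) := by noncomm_ring
      _ = D * (D * (D * DD)) * (D * DD) := by rw [heD]
      _ = D * D * ((D * DD) * (D * DD)) := by noncomm_ring
      _ = D * D * (D * DD) := by rw [hee]
  have hD'2 : IsNilpotent ((D * (D * DD)) - (D * (D * DD)) ^ 2) := by
    have key : (D * (D * DD)) - (D * (D * DD)) ^ 2 = (D - D ^ 2) * (D * DD) := by
      rw [sq, hD'sq]; noncomm_ring
    rw [key]
    exact (Commute.sub_left cED.symm (cED.symm.pow_left 2)).isNilpotent_mul_right hD2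
  have hD'3 : IsNilpotent ((D * (D * DD)) - (D * (D * DD)) ^ 3) := nilp_sub_cube hD'2
  have hqnil : IsNilpotent (D - (D * (D * DD))) := by
    have key : (D - (D * (D * DD))) = (D - D * DD) * (1 - D * DD) := by
      have expand : (D - D * DD) * (1 - D * DD)
          = D - D * (D * DD) - (D * DD) + (D * DD) * (D * DD) := by noncomm_ring
      rw [expand, hee]; abel
    rw [key]
    exact (Commute.sub_right (Commute.one_right _)
      (Commute.sub_left cED.symm (Commute.refl _))).isNilpotent_mul_right hDn
  have hD'q : (D * (D * DD)) * (D - (D * (D * DD))) = 0 := by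
    have e1 : (D * (D * DD)) * (D - (D * (D * DD))) = D * ((D * DD) * D) - (D * (D * DD)) * (D * (D * DD)) := by noncomm_ring
    rw [e1, heD, hD'sq]; noncomm_ring
  have hqC : (D - (D * (D * DD))) * C = 0 := by
    have e1 : (D - (D * (D * DD))) * C = D * C - D * ((D * DD) * C) := by noncomm_ring
    rw [e1, ← heC, sub_self]
  have hqD' : (D - (D * (D * DD))) * (D * (D * DD)) = 0 := by
    have e1 : (D - (D * (D * DD))) * (D * (D * DD)) = D * (D * (D * DD)) - D * ((D * DD) * D) * (D * DD) := by noncomm_ring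
    rw [e1, heD]
    have e2 : D * (D * (D * DD)) * (D * DD) = D * (D * ((D * DD) * (D * DD))) := by noncomm_ring
    rw [e2, hee]; noncomm_ring
  -- matrices
  have hMPQ : (!![A, B; C, D] : Matrix (Fin 2) (Fin 2) (X →L[ℂ] X))
      = !![A, B; C, (D * (D * DD))] + !![0, 0; 0, (D - (D * (D * DD)))] := by
    rw [add_fin_two']
    exact eq_fin_two (by abel) (by abel) (by abel) (by abel)
  have hPQ : (!![A, B; C, (D * (D * DD))] : Matrix (Fin 2) (Fin 2) (X →L[ℂ] X)) * !![0, 0; 0, (D - (D * (D * DD)))] = 0 := by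
    rw [Matrix.mul_fin_two, zero_fin_two']
    refine eq_fin_two (by simp) ?_ (by simp) ?_
    · have e1 : B * (D - (D * (D * DD))) = B * D - B * D * (D * DD) := by noncomm_ring
      rw [e1, h1]; simp
    · rw [hD'q]; simp
  have hQP : (!![0, 0; 0, (D - (D * (D * DD)))] : Matrix (Fin 2) (Fin 2) (X →L[ℂ] X)) * !![A, B; C, (D * (D * DD))] = 0 := by
    rw [Matrix.mul_fin_two, zero_fin_two']
    refine eq_fin_two (by simp) (by simp) ?_ ?_
    · rw [hqC]; simp
    · rw [hqD']; simp
  have hP2 : (!![A, B; C, (D * (D * DD))] : Matrix (Fin 2) (Fin 2) (X →L[ℂ] X)) * !![A, B; C, (D * (D * DD))]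
      = !![A * A, A * B; C * A + (D * (D * DD)) * C, C * B + (D * (D * DD)) * (D * (D * DD))] := by
    rw [Matrix.mul_fin_two]
    exact eq_fin_two (by rw [hBC, add_zero]) (by rw [hBD', add_zero]) rfl rfl
  have hP3 : (!![A, B; C, (D * (D * DD))] : Matrix (Fin 2) (Fin 2) (X →L[ℂ] X)) * !![A, B; C, (D * (D * DD))] * !![A, B; C, (D * (D * DD))]
      = !![A * A * A, A * A * B;
           C * A * A + (D * (D * DD)) * (C * A) + (D * (D * DD)) * (D * (D * DD)) * C,
           C * (A * B) + (D * (D * DD)) * (C * B) + (D * (D * DD)) * (D * (D * DD)) * (D * (D * DD))] := by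
    rw [hP2, Matrix.mul_fin_two]
    refine eq_fin_two ?_ ?_ ?_ ?_
    · rw [mul_assoc A B C, hBC]; simp
    · rw [mul_assoc A B (D * (D * DD)), hBD']; simp
    · have e1 : (C * A + (D * (D * DD)) * C) * A + (C * B + (D * (D * DD)) * (D * (D * DD))) * C
          = (C * A * A + (D * (D * DD)) * (C * A) + (D * (D * DD)) * (D * (D * DD)) * C) + C * (B * C) := by noncomm_ring
      rw [e1, hBC]; simp
    · have e1 : (C * A + (D * (D * DD)) * C) * B + (C * B + (D * (D * DD)) * (D * (D * DD))) * (D * (D * DD))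
          = (C * (A * B) + (D * (D * DD)) * (C * B) + (D * (D * DD)) * (D * (D * DD)) * (D * (D * DD))) + C * (B * (D * (D * DD))) := by noncomm_ring
      rw [e1, hBD']; simp
  have hU : (!![A, B; C, (D * (D * DD))] : Matrix (Fin 2) (Fin 2) (X →L[ℂ] X)) - !![A, B; C, (D * (D * DD))] * !![A, B; C, (D * (D * DD))] * !![A, B; C, (D * (D * DD))]
      = !![(A - A * A * A), (B - A * A * B); (C - (C * A * A + (D * (D * DD)) * (C * A) + (D * (D * DD)) * (D * (D * DD)) * C)), ((D * (D * DD)) - (C * (A * B) + (D * (D * DD)) * (C * B) + (D * (D * DD)) * (D * (D * DD)) * (D * (D * DD))))] := by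
    rw [hP3, sub_fin_two']
  -- B annihilates the lower row expressions
  have hBc1 : B * (C - (C * A * A + (D * (D * DD)) * (C * A) + (D * (D * DD)) * (D * (D * DD)) * C)) = 0 := by
    have e1 : B * (C - (C * A * A + (D * (D * DD)) * (C * A) + (D * (D * DD)) * (D * (D * DD)) * C))
        = B * C - ((B * C) * (A * A) + (B * (D * (D * DD))) * (C * A) + (B * (D * (D * DD))) * ((D * (D * DD)) * C)) := by
      noncomm_ring
    rw [e1, hBC, hBD']; simp
  have hBy1 : B * ((D * (D * DD)) - (C * (A * B) + (D * (D * DD)) * (C * B) + (D * (D * DD)) * (D * (D * DD)) * (D * (D * DD)))) = 0 := by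
    have e1 : B * ((D * (D * DD)) - (C * (A * B) + (D * (D * DD)) * (C * B) + (D * (D * DD)) * (D * (D * DD)) * (D * (D * DD))))
        = B * (D * (D * DD)) - ((B * C) * (A * B) + (B * (D * (D * DD))) * (C * B) + (B * (D * (D * DD))) * ((D * (D * DD)) * (D * (D * DD)))) := by
      noncomm_ring
    rw [e1, hBC, hBD']; simp
  have hb1c1 : (B - A * A * B) * (C - (C * A * A + (D * (D * DD)) * (C * A) + (D * (D * DD)) * (D * (D * DD)) * C)) = 0 := by
    have e1 : (B - A * A * B) * (C - (C * A * A + (D * (D * DD)) * (C * A) + (D * (D * DD)) * (D * (D * DD)) * C)) = B * (C - (C * A * A + (D * (D * DD)) * (C * A) + (D * (D * DD)) * (D * (D * DD)) * C)) - A * A * (B * (C - (C * A * A + (D * (D * DD)) * (C * A) + (D * (D * DD)) * (D * (D * DD)) * C))) := by noncomm_ring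
    rw [e1, hBc1]; simp
  have hb1y1 : (B - A * A * B) * ((D * (D * DD)) - (C * (A * B) + (D * (D * DD)) * (C * B) + (D * (D * DD)) * (D * (D * DD)) * (D * (D * DD)))) = 0 := by
    have e1 : (B - A * A * B) * ((D * (D * DD)) - (C * (A * B) + (D * (D * DD)) * (C * B) + (D * (D * DD)) * (D * (D * DD)) * (D * (D * DD)))) = B * ((D * (D * DD)) - (C * (A * B) + (D * (D * DD)) * (C * B) + (D * (D * DD)) * (D * (D * DD)) * (D * (D * DD)))) - A * A * (B * ((D * (D * DD)) - (C * (A * B) + (D * (D * DD)) * (C * B) + (D * (D * DD)) * (D * (D * DD)) * (D * (D * DD))))) := by noncomm_ring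
    rw [e1, hBy1]; simp
  -- y1 is nilpotent
  have hgy : ((C * A + (D * (D * DD)) * C) * B) * ((D * (D * DD)) - (C * (A * B) + (D * (D * DD)) * (C * B) + (D * (D * DD)) * (D * (D * DD)) * (D * (D * DD)))) = 0 := by
    rw [mul_assoc, hBy1, mul_zero]
  have hy1nil : IsNilpotent ((D * (D * DD)) - (C * (A * B) + (D * (D * DD)) * (C * B) + (D * (D * DD)) * (D * (D * DD)) * (D * (D * DD)))) := by
    have hsplit : ((D * (D * DD)) - (C * (A * B) + (D * (D * DD)) * (C * B) + (D * (D * DD)) * (D * (D * DD)) * (D * (D * DD)))) = ((D * (D * DD)) - (D * (D * DD)) * (D * (D * DD)) * (D * (D * DD))) + (-((C * A + (D * (D * DD)) * C) * B)) := by noncomm_ring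
    rw [hsplit]
    refine nilp_add_ann ?_ ?_
    · rw [show (D * (D * DD)) - (D * (D * DD)) * (D * (D * DD)) * (D * (D * DD)) = (D * (D * DD)) - (D * (D * DD)) ^ 3 from by noncomm_ring]
      exact hD'3
    · rw [show ((D * (D * DD)) - (D * (D * DD)) * (D * (D * DD)) * (D * (D * DD))) + (-((C * A + (D * (D * DD)) * C) * B)) = ((D * (D * DD)) - (C * (A * B) + (D * (D * DD)) * (C * B) + (D * (D * DD)) * (D * (D * DD)) * (D * (D * DD)))) from hsplit.symm]
      rw [neg_mul, hgy, neg_zero]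
  have hx1nil : IsNilpotent (A - A * A * A) := by
    rw [show (A - A * A * A) = A - A ^ 3 from by noncomm_ring]
    exact hA3
  have hTnil : IsNilpotent (!![(A - A * A * A), 0; (C - (C * A * A + (D * (D * DD)) * (C * A) + (D * (D * DD)) * (D * (D * DD)) * C)), ((D * (D * DD)) - (C * (A * B) + (D * (D * DD)) * (C * B) + (D * (D * DD)) * (D * (D * DD)) * (D * (D * DD))))] : Matrix (Fin 2) (Fin 2) (X →L[ℂ] X)) :=
    tri_nilpotent hx1nil hy1nil
  have hUTB : (!![(A - A * A * A), (B - A * A * B); (C - (C * A * A + (D * (D * DD)) * (C * A) + (D * (D * DD)) * (D * (D * DD)) * C)), ((D * (D * DD)) - (C * (A * B) + (D * (D * DD)) * (C * B) + (D * (D * DD)) * (D * (D * DD)) * (D * (D * DD))))] : Matrix (Fin 2) (Fin 2) (X →L[ℂ] X))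
      = !![(A - A * A * A), 0; (C - (C * A * A + (D * (D * DD)) * (C * A) + (D * (D * DD)) * (D * (D * DD)) * C)), ((D * (D * DD)) - (C * (A * B) + (D * (D * DD)) * (C * B) + (D * (D * DD)) * (D * (D * DD)) * (D * (D * DD))))] + !![0, (B - A * A * B); 0, 0] := by
    rw [add_fin_two']
    exact eq_fin_two (by abel) (by abel) (by abel) (by abel)
  have hBmU : (!![0, (B - A * A * B); 0, 0] : Matrix (Fin 2) (Fin 2) (X →L[ℂ] X)) * !![(A - A * A * A), (B - A * A * B); (C - (C * A * A + (D * (D * DD)) * (C * A) + (D * (D * DD)) * (D * (D * DD)) * C)), ((D * (D * DD)) - (C * (A * B) + (D * (D * DD)) * (C * B) + (D * (D * DD)) * (D * (D * DD)) * (D * (D * DD))))] = 0 := by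
    rw [Matrix.mul_fin_two, zero_fin_two']
    refine eq_fin_two ?_ ?_ (by simp) (by simp)
    · rw [hb1c1]; simp
    · rw [hb1y1]; simp
  have hUnil : IsNilpotent ((!![A, B; C, (D * (D * DD))] : Matrix (Fin 2) (Fin 2) (X →L[ℂ] X))
      - !![A, B; C, (D * (D * DD))] * !![A, B; C, (D * (D * DD))] * !![A, B; C, (D * (D * DD))]) := by
    rw [hU, hUTB]
    refine nilp_add_ann hTnil ?_
    rw [← hUTB]
    exact hBmU
  have hQnil : IsNilpotent (!![0, 0; 0, (D - (D * (D * DD)))] : Matrix (Fin 2) (Fin 2) (X →L[ℂ] X)) :=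
    tri_nilpotent ⟨1, by simp⟩ hqnil
  have hVnil : IsNilpotent ((!![0, 0; 0, (D - (D * (D * DD)))] : Matrix (Fin 2) (Fin 2) (X →L[ℂ] X))
      - !![0, 0; 0, (D - (D * (D * DD)))] * !![0, 0; 0, (D - (D * (D * DD)))] * !![0, 0; 0, (D - (D * (D * DD)))]) := by
    rw [show (!![0, 0; 0, (D - (D * (D * DD)))] : Matrix (Fin 2) (Fin 2) (X →L[ℂ] X))
        - !![0, 0; 0, (D - (D * (D * DD)))] * !![0, 0; 0, (D - (D * (D * DD)))] * !![0, 0; 0, (D - (D * (D * DD)))]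
        = !![0, 0; 0, (D - (D * (D * DD)))] * (1 - !![0, 0; 0, (D - (D * (D * DD)))] * !![0, 0; 0, (D - (D * (D * DD)))]) from by noncomm_ring]
    exact (Commute.sub_right (Commute.one_right _)
      ((Commute.refl _).mul_right (Commute.refl _))).isNilpotent_mul_right hQnil
  -- assemble
  apply hirano_of_nilpotent
  have hMM : (!![A, B; C, D] : Matrix (Fin 2) (Fin 2) (X →L[ℂ] X)) * !![A, B; C, D]
      = !![A, B; C, (D * (D * DD))] * !![A, B; C, (D * (D * DD))] + !![0, 0; 0, (D - (D * (D * DD)))] * !![0, 0; 0, (D - (D * (D * DD)))] := by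
    rw [hMPQ]
    have expand : (!![A, B; C, (D * (D * DD))] + !![0, 0; 0, (D - (D * (D * DD)))]) * (!![A, B; C, (D * (D * DD))] + !![0, 0; 0, (D - (D * (D * DD)))])
        = !![A, B; C, (D * (D * DD))] * !![A, B; C, (D * (D * DD))] + (!![A, B; C, (D * (D * DD))] * !![0, 0; 0, (D - (D * (D * DD)))]
          + (!![0, 0; 0, (D - (D * (D * DD)))] * !![A, B; C, (D * (D * DD))] + !![0, 0; 0, (D - (D * (D * DD)))] * !![0, 0; 0, (D - (D * (D * DD)))])) := by
      noncomm_ring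
    rw [expand, hPQ, hQP]; simp
  have hM3 : (!![A, B; C, D] : Matrix (Fin 2) (Fin 2) (X →L[ℂ] X)) * !![A, B; C, D] * !![A, B; C, D]
      = !![A, B; C, (D * (D * DD))] * !![A, B; C, (D * (D * DD))] * !![A, B; C, (D * (D * DD))]
        + !![0, 0; 0, (D - (D * (D * DD)))] * !![0, 0; 0, (D - (D * (D * DD)))] * !![0, 0; 0, (D - (D * (D * DD)))] := by
    rw [hMM]
    conv_lhs => rw [hMPQ]
    have expand : (!![A, B; C, (D * (D * DD))] * !![A, B; C, (D * (D * DD))] + !![0, 0; 0, (D - (D * (D * DD)))] * !![0, 0; 0, (D - (D * (D * DD)))])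
          * (!![A, B; C, (D * (D * DD))] + !![0, 0; 0, (D - (D * (D * DD)))])
        = !![A, B; C, (D * (D * DD))] * !![A, B; C, (D * (D * DD))] * !![A, B; C, (D * (D * DD))]
          + (!![A, B; C, (D * (D * DD))] * (!![A, B; C, (D * (D * DD))] * !![0, 0; 0, (D - (D * (D * DD)))])
          + (!![0, 0; 0, (D - (D * (D * DD)))] * (!![0, 0; 0, (D - (D * (D * DD)))] * !![A, B; C, (D * (D * DD))])
          + !![0, 0; 0, (D - (D * (D * DD)))] * !![0, 0; 0, (D - (D * (D * DD)))] * !![0, 0; 0, (D - (D * (D * DD)))])) := by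
      noncomm_ring
    rw [expand, hPQ, hQP]; simp
  have hMsub : (!![A, B; C, D] : Matrix (Fin 2) (Fin 2) (X →L[ℂ] X))
        - !![A, B; C, D] * !![A, B; C, D] * !![A, B; C, D]
      = ((!![A, B; C, (D * (D * DD))] : Matrix (Fin 2) (Fin 2) (X →L[ℂ] X))
          - !![A, B; C, (D * (D * DD))] * !![A, B; C, (D * (D * DD))] * !![A, B; C, (D * (D * DD))])
        + ((!![0, 0; 0, (D - (D * (D * DD)))] : Matrix (Fin 2) (Fin 2) (X →L[ℂ] X))
          - !![0, 0; 0, (D - (D * (D * DD)))] * !![0, 0; 0, (D - (D * (D * DD)))] * !![0, 0; 0, (D - (D * (D * DD)))]) := by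
    rw [hM3]
    conv_lhs => rw [hMPQ]
    abel
  have hUV : ((!![A, B; C, (D * (D * DD))] : Matrix (Fin 2) (Fin 2) (X →L[ℂ] X))
        - !![A, B; C, (D * (D * DD))] * !![A, B; C, (D * (D * DD))] * !![A, B; C, (D * (D * DD))])
      * ((!![0, 0; 0, (D - (D * (D * DD)))] : Matrix (Fin 2) (Fin 2) (X →L[ℂ] X))
        - !![0, 0; 0, (D - (D * (D * DD)))] * !![0, 0; 0, (D - (D * (D * DD)))] * !![0, 0; 0, (D - (D * (D * DD)))]) = 0 := by
    have expand : ((!![A, B; C, (D * (D * DD))] : Matrix (Fin 2) (Fin 2) (X →L[ℂ] X))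
          - !![A, B; C, (D * (D * DD))] * !![A, B; C, (D * (D * DD))] * !![A, B; C, (D * (D * DD))])
        * ((!![0, 0; 0, (D - (D * (D * DD)))] : Matrix (Fin 2) (Fin 2) (X →L[ℂ] X))
          - !![0, 0; 0, (D - (D * (D * DD)))] * !![0, 0; 0, (D - (D * (D * DD)))] * !![0, 0; 0, (D - (D * (D * DD)))])
        = (!![A, B; C, (D * (D * DD))] * !![0, 0; 0, (D - (D * (D * DD)))]) * (1 - !![0, 0; 0, (D - (D * (D * DD)))] * !![0, 0; 0, (D - (D * (D * DD)))])
          - (!![A, B; C, (D * (D * DD))] * !![A, B; C, (D * (D * DD))])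
            * ((!![A, B; C, (D * (D * DD))] * !![0, 0; 0, (D - (D * (D * DD)))]) * (1 - !![0, 0; 0, (D - (D * (D * DD)))] * !![0, 0; 0, (D - (D * (D * DD)))])) := by
      noncomm_ring
    rw [expand, hPQ]; simp
  have hVU : ((!![0, 0; 0, (D - (D * (D * DD)))] : Matrix (Fin 2) (Fin 2) (X →L[ℂ] X))
        - !![0, 0; 0, (D - (D * (D * DD)))] * !![0, 0; 0, (D - (D * (D * DD)))] * !![0, 0; 0, (D - (D * (D * DD)))])
      * ((!![A, B; C, (D * (D * DD))] : Matrix (Fin 2) (Fin 2) (X →L[ℂ] X))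
        - !![A, B; C, (D * (D * DD))] * !![A, B; C, (D * (D * DD))] * !![A, B; C, (D * (D * DD))]) = 0 := by
    have expand : ((!![0, 0; 0, (D - (D * (D * DD)))] : Matrix (Fin 2) (Fin 2) (X →L[ℂ] X))
          - !![0, 0; 0, (D - (D * (D * DD)))] * !![0, 0; 0, (D - (D * (D * DD)))] * !![0, 0; 0, (D - (D * (D * DD)))])
        * ((!![A, B; C, (D * (D * DD))] : Matrix (Fin 2) (Fin 2) (X →L[ℂ] X))
          - !![A, B; C, (D * (D * DD))] * !![A, B; C, (D * (D * DD))] * !![A, B; C, (D * (D * DD))])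
        = (!![0, 0; 0, (D - (D * (D * DD)))] * !![A, B; C, (D * (D * DD))]) * (1 - !![A, B; C, (D * (D * DD))] * !![A, B; C, (D * (D * DD))])
          - (!![0, 0; 0, (D - (D * (D * DD)))] * !![0, 0; 0, (D - (D * (D * DD)))])
            * ((!![0, 0; 0, (D - (D * (D * DD)))] * !![A, B; C, (D * (D * DD))]) * (1 - !![A, B; C, (D * (D * DD))] * !![A, B; C, (D * (D * DD))])) := by
      noncomm_ring
    rw [expand, hQP]; simp
  have hcomUV : Commute
      ((!![A, B; C, (D * (D * DD))] : Matrix (Fin 2) (Fin 2) (X →L[ℂ] X))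
        - !![A, B; C, (D * (D * DD))] * !![A, B; C, (D * (D * DD))] * !![A, B; C, (D * (D * DD))])
      ((!![0, 0; 0, (D - (D * (D * DD)))] : Matrix (Fin 2) (Fin 2) (X →L[ℂ] X))
        - !![0, 0; 0, (D - (D * (D * DD)))] * !![0, 0; 0, (D - (D * (D * DD)))] * !![0, 0; 0, (D - (D * (D * DD)))]) := hUV.trans hVU.symm
  rw [show (!![A, B; C, D] : Matrix (Fin 2) (Fin 2) (X →L[ℂ] X)) - !![A, B; C, D] ^ 3
      = !![A, B; C, D] - !![A, B; C, D] * !![A, B; C, D] * !![A, B; C, D] from by noncomm_ring]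
  rw [hMsub]
  exact hcomUV.isNilpotent_add hUnil hVnil
end

section
/- Let X be a complex Banach space and L(X) the Banach algebra of bounded linear operators on X. Suppose A and D have strongly Drazin inverses. If CB = 0, BD = 0 and CA = 0, then the operator matrix [[A, B], [C, D]] has a Hirano inverse in M₂(L(X)). -/
section Auxiliary

variable {R : Type*} [Ring R]

open Finset in
/-- Expansion of `(u + r) ^ m` when `r * u = 0`. -/
lemma aux_add_pow (u r : R) (h : r * u = 0) (m : ℕ) :
    (u + r) ^ m = ∑ i ∈ range (m + 1), u ^ (m - i) * r ^ i := by
  induction m with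
  | zero => simp
  | succ m ih =>
    have hru : ∀ i : ℕ, r ^ (i + 1) * u = 0 := by
      intro i; rw [pow_succ, mul_assoc, h, mul_zero]
    rw [pow_succ, ih, Finset.sum_mul]
    have h1 : ∀ i ∈ range (m + 1), u ^ (m - i) * r ^ i * (u + r)
        = u ^ (m - i) * r ^ i * u + u ^ (m + 1 - (i + 1)) * r ^ (i + 1) := by
      intro i hi
      rw [mul_add, Nat.succ_sub_succ, mul_assoc, mul_assoc, ← pow_succ]
    rw [Finset.sum_congr rfl h1, Finset.sum_add_distrib]
    have h2 : ∑ i ∈ range (m + 1), u ^ (m - i) * r ^ i * u = u ^ (m + 1) := by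
      rw [Finset.sum_eq_single_of_mem 0 (by simp)]
      · simp [pow_succ]
      · intro i hi hne
        obtain ⟨j, rfl⟩ := Nat.exists_eq_succ_of_ne_zero hne
        rw [mul_assoc, hru j, mul_zero]
    rw [h2, Finset.sum_range_succ' (fun i => u ^ (m + 1 - i) * r ^ i) (m + 1)]
    simp [Nat.succ_sub_succ, add_comm]

/-- If `r * u = 0` and both are nilpotent, then `u + r` is nilpotent. -/
lemma isNilpotent_add_of_mul_eq_zero {u r : R} (h : r * u = 0)
    (hu : IsNilpotent u) (hr : IsNilpotent r) : IsNilpotent (u + r) := by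
  obtain ⟨p, hp⟩ := hu
  obtain ⟨q, hq⟩ := hr
  refine ⟨p + q, ?_⟩
  rw [aux_add_pow u r h]
  apply Finset.sum_eq_zero
  intro i hi
  by_cases hiq : q ≤ i
  · rw [show i = q + (i - q) by omega, pow_add, hq, zero_mul, mul_zero]
  · rw [show p + q - i = p + (q - i) by omega, pow_add, hp, zero_mul, zero_mul]

open Finset in
/-- If `b - b^2` is nilpotent, then `b` has a "strongly Drazin inverse" which moreover
commutes with everything commuting with `b`. -/
lemma exists_sd (b : R) (h : IsNilpotent (b - b * b)) :
    ∃ z : R, (∀ x : R, Commute b x → Commute z x) ∧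
      z = z * b * z ∧ IsNilpotent (b - b * z) := by
  obtain ⟨k₀, hk₀⟩ := h
  have hk : (b - b * b) ^ (k₀ + 1) = 0 := by rw [pow_succ, hk₀, zero_mul]
  have hb1 : Commute b (1 - b) := ((Commute.one_right b).sub_right (Commute.refl b))
  have hfac : b - b * b = b * (1 - b) := by noncomm_ring
  have hbk1 : b ^ (k₀ + 1) * (1 - b) ^ (k₀ + 1) = 0 := by
    rw [← hb1.mul_pow, ← hfac, hk]
  set s : R := ∑ i ∈ range (k₀ + 1), b ^ i with hsdef
  have hsb : s * (1 - b) = 1 - b ^ (k₀ + 1) := by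
    have h' : s * (1 - b) = -(s * (b - 1)) := by
      rw [← neg_sub b 1, mul_neg]
    rw [h', hsdef, geom_sum_mul, neg_sub]
  set w : R := 1 - b ^ (k₀ + 1) with hwdef
  set t : R := ∑ i ∈ range (k₀ + 1), w ^ i with htdef
  set e : R := b ^ (k₀ + 1) * t with hedef
  have hcs : ∀ x : R, Commute b x → Commute s x := fun x hx =>
    Commute.sum_left _ _ _ (fun i _ => hx.pow_left i)
  have hcw : ∀ x : R, Commute b x → Commute w x := fun x hx =>
    (Commute.one_left x).sub_left (hx.pow_left (k₀ + 1))
  have hct : ∀ x : R, Commute b x → Commute t x := fun x hx =>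
    Commute.sum_left _ _ _ (fun i _ => (hcw x hx).pow_left i)
  have hce : ∀ x : R, Commute b x → Commute e x := fun x hx =>
    (hx.pow_left (k₀ + 1)).mul_left (hct x hx)
  set n : R := (1 - b) * e with hndef
  have hcn : ∀ x : R, Commute b x → Commute n x := fun x hx =>
    (((Commute.one_left x).sub_left hx)).mul_left (hce x hx)
  set c : R := ∑ i ∈ range (k₀ + 1), n ^ i with hcdef
  have hcc : ∀ x : R, Commute b x → Commute c x := fun x hx =>
    Commute.sum_left _ _ _ (fun i _ => (hcn x hx).pow_left i)
  set z : R := e * c with hzdef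
  have hcz : ∀ x : R, Commute b x → Commute z x := fun x hx =>
    (hce x hx).mul_left (hcc x hx)
  have cbe : Commute b e := (hce b (Commute.refl b)).symm
  have cbt : Commute b t := (hct b (Commute.refl b)).symm
  have cbs : Commute b s := (hcs b (Commute.refl b)).symm
  have cbz : Commute b z := (hcz b (Commute.refl b)).symm
  have hte : t * (1 - w) = 1 - w ^ (k₀ + 1) := by
    have h' : t * (1 - w) = -(t * (w - 1)) := by
      rw [← neg_sub w 1, mul_neg]
    rw [h', htdef, geom_sum_mul, neg_sub]
  have h1w : (1 : R) - w = b ^ (k₀ + 1) := by rw [hwdef, sub_sub_cancel]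
  have he : e = 1 - w ^ (k₀ + 1) := by
    rw [hedef, ((cbt.pow_left (k₀ + 1)).eq), ← h1w, hte]
  have hbkwk : b ^ (k₀ + 1) * w ^ (k₀ + 1) = 0 := by
    have hcs1b : Commute s (1 - b) := hcs (1 - b) hb1
    rw [← hsb, hcs1b.mul_pow, ← mul_assoc, ((cbs.pow_pow (k₀ + 1) (k₀ + 1)).eq),
      mul_assoc, hbk1, mul_zero]
  have hewk : e * w ^ (k₀ + 1) = 0 := by
    rw [hedef, ((cbt.pow_left (k₀ + 1)).eq), mul_assoc, hbkwk, mul_zero]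
  have hee : e * e = e := by
    nth_rewrite 2 [he]
    rw [mul_sub, mul_one, hewk, sub_zero]
  have h1bke : (1 - b) ^ (k₀ + 1) * e = 0 := by
    rw [hedef, ← mul_assoc, ← ((hb1.pow_pow (k₀ + 1) (k₀ + 1)).eq), mul_assoc]
    rw [← mul_assoc, hbk1, zero_mul]
  have c1be : Commute (1 - b) e := (hce (1 - b) hb1).symm
  have hnk : n ^ (k₀ + 1) = 0 := by
    rw [hndef, c1be.mul_pow, pow_succ' e, ← mul_assoc, h1bke, zero_mul]
  have c1e1b : Commute (1 - e) (1 - b) :=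
    (Commute.one_left (1 - b)).sub_left (hce (1 - b) hb1)
  have h0e : (1 - e) * e = 0 := by rw [sub_mul, one_mul, hee, sub_self]
  have h1en : (1 - e) * n = 0 := by
    rw [hndef, ← mul_assoc, c1e1b.eq, mul_assoc, h0e, mul_zero]
  have h1ec : (1 - e) * c = 1 - e := by
    rw [hcdef, Finset.mul_sum]
    rw [Finset.sum_eq_single_of_mem 0 (by simp)]
    · simp
    · intro i hi hne
      obtain ⟨j, rfl⟩ := Nat.exists_eq_succ_of_ne_zero hne
      rw [pow_succ' n, ← mul_assoc, h1en, zero_mul]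
  have hnc : n * c = c - 1 := by
    have h' : c - n * c = 1 := by
      rw [hcdef, Finset.mul_sum, ← Finset.sum_sub_distrib]
      have h'' : ∀ i ∈ range (k₀ + 1), n ^ i - n * n ^ i = n ^ i - n ^ (i + 1) := by
        intro i _; rw [pow_succ' n]
      rw [Finset.sum_congr rfl h'', Finset.sum_range_sub' (fun i => n ^ i), pow_zero, hnk,
        sub_zero]
    rw [← h']; abel
  have hec : e * c = c - (1 - e) := by
    calc e * c = (1 - (1 - e)) * c := by rw [sub_sub_cancel]
    _ = c - (1 - e) * c := by rw [sub_mul, one_mul]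
    _ = c - (1 - e) := by rw [h1ec]
  have hbe : b * e = e - n := by rw [hndef]; noncomm_ring
  have hbz : b * z = e := by
    rw [hzdef, ← mul_assoc, hbe, sub_mul, hec, hnc]; abel
  refine ⟨z, hcz, ?_, ?_⟩
  · calc z = e * c := hzdef
    _ = (e * e) * c := by rw [hee]
    _ = e * z := by rw [hzdef, mul_assoc]
    _ = (b * z) * z := by rw [hbz]
    _ = z * b * z := by rw [cbz.eq]
  · rw [hbz]
    have hbe' : b - e = b * (1 - e) - n := by rw [hndef]; noncomm_ring
    rw [hbe']
    have cb1e : Commute b (1 - e) := (Commute.one_right b).sub_right cbe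
    have hbenil : (b * (1 - e)) ^ (k₀ + 1) = 0 := by
      rw [cb1e.mul_pow]
      have h1e : (1 : R) - e = w ^ (k₀ + 1) := by rw [he, sub_sub_cancel]
      rw [h1e, pow_succ' (w ^ (k₀ + 1)) k₀, ← mul_assoc, hbkwk, zero_mul]
    have cn : Commute (b * (1 - e)) n :=
      (hcn (b * (1 - e)) ((Commute.refl b).mul_right cb1e)).symm
    exact cn.isNilpotent_sub ⟨k₀ + 1, hbenil⟩ ⟨k₀ + 1, hnk⟩

/-- If `a - a^3` is nilpotent then `a` has a Hirano inverse. -/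
lemma hirano_of_nil (a : R) (h : IsNilpotent (a - a ^ 3)) : HasHiranoInverse a := by
  have hb : IsNilpotent (a ^ 2 - a ^ 2 * a ^ 2) := by
    have heq : a ^ 2 - a ^ 2 * a ^ 2 = a * (a - a ^ 3) := by noncomm_ring
    rw [heq]
    exact (((Commute.refl a).sub_right ((Commute.refl a).pow_right 3))).isNilpotent_mul_left h
  obtain ⟨z₀, hzc, hz₀, hnil⟩ := exists_sd (a ^ 2) hb
  have haz : Commute a z₀ := (hzc a ((Commute.refl a).pow_left 2)).symm
  refine ⟨a * z₀, ?_, ?_, ?_⟩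
  · rw [mul_assoc a z₀ a, ← haz.eq]
  · calc a * z₀ = a * (z₀ * a ^ 2 * z₀) := by rw [← hz₀]
    _ = (a * z₀ * a) * (a * z₀) := by rw [pow_two]; noncomm_ring
    _ = a * z₀ * a * (a * z₀) := by rw [mul_assoc]
  · have heq2 : a ^ 2 - a * (a * z₀) = a ^ 2 - a ^ 2 * z₀ := by
      rw [← mul_assoc, ← pow_two]
    rw [heq2]; exact hnil

/-- If `a` has a strongly Drazin inverse, then `a - a^3` is nilpotent. -/
lemma nil_sub_pow_of_sd (a : R) (h : HasStronglyDrazinInverse a) :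
    IsNilpotent (a - a ^ 3) := by
  obtain ⟨z, hc, hz, hn⟩ := h
  set p : R := a * z with hpdef
  have hap : Commute a p := (Commute.refl a).mul_right hc
  have hpp : p * p = p := by
    have h' : p * p = a * (z * a * z) := by
      rw [hpdef]; noncomm_ring
    rw [h', ← hz, hpdef]
  have key : a - a * a = (1 - a - p) * (a - p) := by
    have expand : (1 - a - p) * (a - p) = a - a * a + (a * p - p * a) + (p * p - p) := by
      noncomm_ring
    rw [expand, hap.eq, sub_self, hpp, sub_self, add_zero, add_zero]
  have c1 : Commute (1 - a - p) (a - p) := by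
    have c2 : Commute a (a - p) := (Commute.refl a).sub_right hap
    have c3 : Commute p (a - p) := hap.symm.sub_right (Commute.refl p)
    exact ((Commute.one_left (a - p)).sub_left c2).sub_left c3
  have hnil2 : IsNilpotent (a - a * a) := by
    rw [key]; exact c1.isNilpotent_mul_left hn
  have heq : a - a ^ 3 = (a - a * a) * (1 + a) := by noncomm_ring
  rw [heq]
  have ca1 : Commute a (1 + a) := (Commute.one_right a).add_right (Commute.refl a)
  have c4 : Commute (a - a * a) (1 + a) := (ca1.sub_left (ca1.mul_left ca1))
  exact c4.isNilpotent_mul_right hnil2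

/-- Perturbation: if `n * s = 0`, `n^3 = 0` and `s - s^3` is nilpotent,
then `(s+n) - (s+n)^3` is nilpotent. -/
lemma pert_nil (s n : R) (hns : n * s = 0) (hn3 : n * n * n = 0)
    (hs : IsNilpotent (s - s ^ 3)) : IsNilpotent (s + n - (s + n) ^ 3) := by
  have hnns : n * n * s = 0 := by rw [mul_assoc, hns, mul_zero]
  set r : R := n - s * s * n - s * (n * n) with hrdef
  have e2 : (s + n) * (s + n) = s * s + s * n + n * n := by
    have h' : (s + n) * (s + n) = s * s + s * n + n * s + n * n := by noncomm_ring
    rw [h', hns, add_zero]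
  have e3 : (s + n) ^ 3 = s * s * s + s * s * n + s * (n * n) := by
    have h3 : (s + n) ^ 3 = ((s + n) * (s + n)) * (s + n) := by rw [pow_succ, pow_two]
    have h' : (s * s + s * n + n * n) * (s + n)
        = s * s * s + s * s * n + s * (n * s) + s * (n * n) + n * n * s + n * n * n := by
      noncomm_ring
    rw [h3, e2, h', hns, mul_zero, add_zero, hnns, add_zero, hn3, add_zero]
  have hq : s + n - (s + n) ^ 3 = (s - s ^ 3) + r := by
    rw [e3, hrdef]; noncomm_ring
  have hrs : r * s = 0 := by
    rw [hrdef, sub_mul, sub_mul]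
    have ha1 : s * s * n * s = s * s * (n * s) := by noncomm_ring
    have ha2 : s * (n * n) * s = s * (n * n * s) := by noncomm_ring
    rw [ha1, ha2, hns, hnns, mul_zero, mul_zero, sub_zero, sub_zero]
  have hru : r * (s - s ^ 3) = 0 := by
    have h' : r * (s - s ^ 3) = r * s - r * s * (s * s) := by noncomm_ring
    rw [h', hrs, zero_mul, sub_zero]
  have hnr : n * r = n * n := by
    rw [hrdef, mul_sub, mul_sub]
    have ha1 : n * (s * s * n) = n * s * (s * n) := by noncomm_ring
    have ha2 : n * (s * (n * n)) = n * s * (n * n) := by noncomm_ring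
    rw [ha1, ha2, hns, zero_mul, zero_mul, sub_zero, sub_zero]
  have hrr : r * r = r * n := by
    calc r * r = r * (n - s * s * n - s * (n * n)) := by rw [← hrdef]
    _ = r * n - r * s * (s * n) - r * s * (n * n) := by noncomm_ring
    _ = r * n := by rw [hrs, zero_mul, zero_mul, sub_zero, sub_zero]
  have hr4 : r * r * (r * r) = 0 := by
    calc r * r * (r * r) = (r * n) * (r * n) := by rw [hrr]
    _ = r * (n * r) * n := by noncomm_ring
    _ = r * (n * n) * n := by rw [hnr]
    _ = 0 := by rw [mul_assoc, mul_assoc, ← mul_assoc n n n, hn3]; simp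
  have hrnil : IsNilpotent r := by
    refine ⟨4, ?_⟩
    rw [show (4 : ℕ) = 2 * 2 from rfl, pow_mul, pow_two, pow_two]
    exact hr4
  rw [hq]
  exact isNilpotent_add_of_mul_eq_zero hru hs hrnil

/-- Powers of a diagonal 2×2 matrix. -/
lemma diag_pow {α : Type*} [Ring α] (a d : α) (m : ℕ) :
    (!![a, 0; 0, d] : Matrix (Fin 2) (Fin 2) α) ^ m = !![a ^ m, 0; 0, d ^ m] := by
  induction m with
  | zero => simp [Matrix.one_fin_two]
  | succ m ih =>
    rw [pow_succ, ih, Matrix.mul_fin_two]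
    simp [pow_succ]

end Auxiliary

variable {X : Type*} [NormedAddCommGroup X] [NormedSpace ℂ X] [CompleteSpace X]

theorem hirano_perturb_cor29 (A B C D : X →L[ℂ] X)
    (hA : HasStronglyDrazinInverse A)
    (hD : HasStronglyDrazinInverse D)
    (h1 : C * B = 0)
    (h2 : B * D = 0)
    (h3 : C * A = 0) :
    HasHiranoInverse (!![A, B; C, D] : Matrix (Fin 2) (Fin 2) (X →L[ℂ] X)) := by
  set S : Matrix (Fin 2) (Fin 2) (X →L[ℂ] X) := !![A, 0; 0, D] with hSdef
  set N : Matrix (Fin 2) (Fin 2) (X →L[ℂ] X) := !![0, B; C, 0] with hNdef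
  have hM : (!![A, B; C, D] : Matrix (Fin 2) (Fin 2) (X →L[ℂ] X)) = S + N := by
    rw [hSdef, hNdef]
    ext i j
    fin_cases i <;> fin_cases j <;> simp [Matrix.add_apply]
  have hNS : N * S = 0 := by
    rw [hSdef, hNdef, Matrix.mul_fin_two]
    simp only [zero_mul, mul_zero, add_zero, zero_add, h2, h3]
    ext i j
    fin_cases i <;> fin_cases j <;> simp
  have hNN : N * N = !![B * C, 0; 0, 0] := by
    rw [hNdef, Matrix.mul_fin_two]
    simp only [zero_mul, mul_zero, add_zero, zero_add, h1]
  have hN3 : N * N * N = 0 := by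
    rw [hNN, hNdef, Matrix.mul_fin_two]
    have : B * C * B = 0 := by rw [mul_assoc, h1, mul_zero]
    simp only [zero_mul, mul_zero, add_zero, zero_add, this]
    ext i j
    fin_cases i <;> fin_cases j <;> simp
  have hu : IsNilpotent (S - S ^ 3) := by
    obtain ⟨p, hp⟩ := nil_sub_pow_of_sd A hA
    obtain ⟨q, hq⟩ := nil_sub_pow_of_sd D hD
    refine ⟨p + q, ?_⟩
    have hSd : S - S ^ 3 = !![A - A ^ 3, 0; 0, D - D ^ 3] := by
      rw [hSdef, diag_pow]
      ext i j
      fin_cases i <;> fin_cases j <;> simp [Matrix.sub_apply]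
    rw [hSd, diag_pow]
    have hp' : (A - A ^ 3) ^ (p + q) = 0 := by rw [pow_add, hp, zero_mul]
    have hq' : (D - D ^ 3) ^ (p + q) = 0 := by rw [pow_add, hq, mul_zero]
    rw [hp', hq']
    ext i j
    fin_cases i <;> fin_cases j <;> simp
  apply hirano_of_nil
  rw [hM]
  exact pert_nil S N hNS hN3 hu
end

section
/- Let X be a complex Banach space and L(X) the Banach algebra of bounded linear operators on X. Let A ∈ L(X) be nilpotent and let B ∈ L(X) have a Hirano inverse B^H. If A B^H = 0 and B^π A B = 0, where B^π = I − B·B^H, then A + B has a Hirano inverse. -/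
lemma mul_pow_succ_eq_zero {R : Type*} [CommRing R] {x y : R} (h : x * y = 0) (n : ℕ) :
    x * y ^ (n + 1) = 0 := by
  rw [pow_succ', ← mul_assoc, h, zero_mul]

open Finset in
/-- In a commutative ring, if `t - t^2` is nilpotent then `t` is the sum of an
idempotent and a nilpotent. -/
lemma exists_idem_comm {R : Type*} [CommRing R] {t : R} (h : IsNilpotent (t - t ^ 2)) :
    ∃ e : R, e * e = e ∧ IsNilpotent (t - e) := by
  obtain ⟨k₀, hk₀⟩ := h
  have hk : (t - t ^ 2) ^ (k₀ + 1) = 0 := by rw [pow_succ, hk₀, zero_mul]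
  -- divisibility of 1 - t^(m+1) - (1-t)^(m+1) by t - t^2
  have hdiv : ∀ m : ℕ, ∃ g : R, 1 - t ^ (m + 1) - (1 - t) ^ (m + 1) = (t - t ^ 2) * g := by
    intro m
    induction m with
    | zero => exact ⟨0, by ring⟩
    | succ m ih =>
      obtain ⟨g, hg⟩ := ih
      refine ⟨g + t ^ m + (1 - t) ^ m, ?_⟩
      have h1 : 1 - t ^ (m + 1 + 1) - (1 - t) ^ (m + 1 + 1)
          = (1 - t ^ (m + 1) - (1 - t) ^ (m + 1)) + (t - t ^ 2) * t ^ m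
            + (t - t ^ 2) * (1 - t) ^ m := by
        rw [pow_succ t (m + 1), pow_succ (1 - t) (m + 1), pow_succ t m, pow_succ (1 - t) m]
        ring
      rw [h1, hg]; ring
  obtain ⟨g, hg⟩ := hdiv k₀
  have huv : t ^ (k₀ + 1) * (1 - t) ^ (k₀ + 1) = 0 := by
    rw [← mul_pow]
    calc (t * (1 - t)) ^ (k₀ + 1) = (t - t ^ 2) ^ (k₀ + 1) := by ring_nf
      _ = 0 := hk
  set u : R := t ^ (k₀ + 1) with hu
  set v : R := (1 - t) ^ (k₀ + 1) with hv
  -- now hg : 1 - u - v = (t - t^2) * g, huv : u * v = 0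
  have hw : IsNilpotent (1 - u - v) := by
    rw [hg]
    exact ⟨k₀ + 1, by rw [mul_pow, hk, zero_mul]⟩
  obtain ⟨K, hK⟩ := hw
  set s : R := ∑ i ∈ range K, (1 - u - v) ^ i with hsdef
  have hs : (u + v) * s = 1 := by
    have h2 : (∑ i ∈ range K, (1 - u - v) ^ i) * ((1 - u - v) - 1) = (1 - u - v) ^ K - 1 :=
      geom_sum_mul _ K
    rw [hK] at h2
    calc (u + v) * s = -(s * ((1 - u - v) - 1)) := by rw [hsdef]; ring
      _ = -(0 - 1) := by rw [hsdef, h2]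
      _ = 1 := by ring
  have h1e : 1 - u * s = v * s := by
    calc 1 - u * s = (u + v) * s - u * s := by rw [hs]
      _ = v * s := by ring
  refine ⟨u * s, ?_, ?_⟩
  · -- idempotent
    have h0 : u * s * (1 - u * s) = 0 := by
      rw [h1e]
      calc u * s * (v * s) = u * v * (s * s) := by ring
        _ = 0 := by rw [huv, zero_mul]
    rw [mul_sub, mul_one, sub_eq_zero] at h0
    exact h0.symm
  · -- t - e nilpotent
    have hn1 : IsNilpotent (t * (v * s)) := by
      refine ⟨k₀ + 1, ?_⟩
      have e1 : (t * (v * s)) ^ (k₀ + 1) = u * v ^ (k₀ + 1) * s ^ (k₀ + 1) := by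
        rw [hu, mul_pow, mul_pow]; ring
      rw [e1, mul_pow_succ_eq_zero huv k₀, zero_mul]
    have hn2 : IsNilpotent ((1 - t) * (u * s)) := by
      refine ⟨k₀ + 1, ?_⟩
      have e1 : ((1 - t) * (u * s)) ^ (k₀ + 1) = v * u ^ (k₀ + 1) * s ^ (k₀ + 1) := by
        rw [hv, mul_pow, mul_pow]; ring
      have huv' : v * u = 0 := by rw [mul_comm]; exact huv
      rw [e1, mul_pow_succ_eq_zero huv' k₀, zero_mul]
    have key : t - u * s = t * (v * s) - (1 - t) * (u * s) := by
      rw [← h1e]; ring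
    rw [key]
    exact (Commute.all _ _).isNilpotent_sub hn1 hn2


open Finset in
lemma pow_add_eq_sum_of_mul_eq_zero {R : Type*} [Ring R] {x y : R} (h : x * y = 0) :
    ∀ n : ℕ, (x + y) ^ n = ∑ i ∈ range (n + 1), y ^ i * x ^ (n - i) := by
  have hxy : ∀ i : ℕ, x * y ^ (i + 1) = 0 := by
    intro i
    rw [pow_succ', ← mul_assoc, h, zero_mul]
  intro n
  induction n with
  | zero => simp
  | succ n ih =>
    rw [pow_succ', ih, add_mul]
    rw [Finset.mul_sum, Finset.mul_sum]
    have hx : ∑ i ∈ range (n + 1), x * (y ^ i * x ^ (n - i)) = x ^ (n + 1) := by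
      rw [Finset.sum_range_succ']
      have : ∀ i ∈ range n, x * (y ^ (i + 1) * x ^ (n - (i + 1))) = 0 := by
        intro i _
        rw [← mul_assoc, hxy, zero_mul]
      rw [Finset.sum_congr rfl this]
      simp [pow_succ']
    have hy : ∑ i ∈ range (n + 1), y * (y ^ i * x ^ (n - i))
        = ∑ i ∈ range (n + 1), y ^ (i + 1) * x ^ (n - i) := by
      refine Finset.sum_congr rfl fun i _ => ?_
      rw [← mul_assoc, ← pow_succ']
    rw [hx, hy]
    rw [Finset.sum_range_succ' (fun i => y ^ i * x ^ (n + 1 - i)) (n + 1)]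
    simp only [pow_zero, one_mul, Nat.sub_zero, Nat.succ_sub_succ_eq_sub]
    rw [add_comm]

lemma isNilpotent_add_of_mul_eq_zero_s12 {R : Type*} [Ring R] {x y : R} (h : x * y = 0)
    (hx : IsNilpotent x) (hy : IsNilpotent y) : IsNilpotent (x + y) := by
  obtain ⟨r, hr⟩ := hx
  obtain ⟨s, hs⟩ := hy
  refine ⟨r + s, ?_⟩
  rw [pow_add_eq_sum_of_mul_eq_zero h]
  refine Finset.sum_eq_zero fun i hi => ?_
  rcases le_or_gt s i with hsi | his
  · rw [pow_eq_zero_of_le hsi hs, zero_mul]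
  · have : r ≤ r + s - i := by omega
    rw [pow_eq_zero_of_le this hr, mul_zero]

/-- If `x` is "triangular" with respect to the idempotent `p` and its diagonal
blocks are nilpotent, then `x` is nilpotent. -/
lemma isNilpotent_of_triangular {R : Type*} [Ring R] {p x : R}
    (h0 : (1 - p) * x * p = 0) (h1 : IsNilpotent (x * p))
    (h2 : IsNilpotent ((1 - p) * x)) : IsNilpotent x := by
  have hxp : x * p = p * (x * p) := by
    have h := h0
    rw [sub_mul, one_mul, sub_mul, sub_eq_zero, mul_assoc] at h
    exact h
  have hqx : (1 - p) * x = ((1 - p) * x) * (1 - p) := by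
    rw [mul_sub, mul_one, h0, sub_zero]
  have hA : ∀ n : ℕ, x ^ (n + 1) * p = (x * p) ^ (n + 1) := by
    intro n
    induction n with
    | zero => simp
    | succ n ih =>
      calc x ^ (n + 1 + 1) * p = x ^ (n + 1) * (x * p) := by
            rw [pow_succ, mul_assoc]
        _ = x ^ (n + 1) * (p * (x * p)) := by rw [← hxp]
        _ = (x ^ (n + 1) * p) * (x * p) := by rw [mul_assoc]
        _ = (x * p) ^ (n + 1) * (x * p) := by rw [ih]
        _ = (x * p) ^ (n + 1 + 1) := by rw [pow_succ (x * p) (n + 1)]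
  have hB : ∀ n : ℕ, (1 - p) * x ^ (n + 1) = ((1 - p) * x) ^ (n + 1) := by
    intro n
    induction n with
    | zero => simp
    | succ n ih =>
      calc (1 - p) * x ^ (n + 1 + 1) = ((1 - p) * x) * x ^ (n + 1) := by
            rw [pow_succ', ← mul_assoc]
        _ = (((1 - p) * x) * (1 - p)) * x ^ (n + 1) := by rw [← hqx]
        _ = ((1 - p) * x) * ((1 - p) * x ^ (n + 1)) := by rw [mul_assoc, mul_assoc]
        _ = ((1 - p) * x) * ((1 - p) * x) ^ (n + 1) := by rw [ih]
        _ = ((1 - p) * x) ^ (n + 1 + 1) := by rw [pow_succ' ((1 - p) * x) (n + 1)]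
  obtain ⟨r, hr⟩ := h1
  obtain ⟨s, hs⟩ := h2
  refine ⟨(r + 1) + (s + 1), ?_⟩
  have hsplit : x ^ (r + 1) = x ^ (r + 1) * p + x ^ (r + 1) * (1 - p) := by
    rw [mul_sub, mul_one]; abel
  rw [pow_add, hsplit, add_mul]
  have e1 : x ^ (r + 1) * p = 0 := by
    rw [hA r, pow_eq_zero_of_le (Nat.le_succ r) hr]
  have e2 : x ^ (r + 1) * (1 - p) * x ^ (s + 1) = 0 := by
    rw [mul_assoc, hB s, pow_eq_zero_of_le (Nat.le_succ s) hs, mul_zero]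
  rw [e1, e2, zero_mul, add_zero]



/-- right-multiplication powers absorb: if `x*p = p*(x*p)` then `x^(n+1)*p = (x*p)^(n+1)`. -/
lemma pow_mul_right_absorb {R : Type*} [Ring R] {p x : R} (h : x * p = p * (x * p)) :
    ∀ n : ℕ, x ^ (n + 1) * p = (x * p) ^ (n + 1) := by
  intro n
  induction n with
  | zero => simp
  | succ n ih =>
    calc x ^ (n + 1 + 1) * p = x ^ (n + 1) * (x * p) := by rw [pow_succ, mul_assoc]
      _ = x ^ (n + 1) * (p * (x * p)) := by rw [← h]
      _ = (x ^ (n + 1) * p) * (x * p) := by rw [mul_assoc]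
      _ = (x * p) ^ (n + 1) * (x * p) := by rw [ih]
      _ = (x * p) ^ (n + 1 + 1) := by rw [pow_succ (x * p) (n + 1)]

/-- left multiplication absorbs through powers: if `q*x = (q*x)*q` then
`q*x^(n+1) = (q*x)^(n+1)`. -/
lemma left_mul_pow_absorb {R : Type*} [Ring R] {q x : R} (h : q * x = (q * x) * q) :
    ∀ n : ℕ, q * x ^ (n + 1) = (q * x) ^ (n + 1) := by
  intro n
  induction n with
  | zero => simp
  | succ n ih =>
    calc q * x ^ (n + 1 + 1) = (q * x) * x ^ (n + 1) := by rw [pow_succ', ← mul_assoc]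
      _ = ((q * x) * q) * x ^ (n + 1) := by rw [← h]
      _ = (q * x) * (q * x ^ (n + 1)) := by rw [mul_assoc]
      _ = (q * x) * (q * x) ^ (n + 1) := by rw [ih]
      _ = (q * x) ^ (n + 1 + 1) := by rw [pow_succ' (q * x) (n + 1)]

/-- If `p` is idempotent commuting with nilpotent `n`, then `(p+n) - (p+n)^2` is
nilpotent. -/
lemma aux_idem_plus_nilp {R : Type*} [Ring R] {p n : R} (hp : p * p = p)
    (hc : p * n = n * p) (hn : IsNilpotent n) : IsNilpotent ((p + n) - (p + n) ^ 2) := by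
  have e1 : (p + n) - (p + n) ^ 2 = n - p * n - n * p - n * n - (p * p - p) := by
    noncomm_ring
  have e2 : n - p * n - n * p - n * n - (p * p - p) = n * (1 - p - p - n) := by
    rw [hp, sub_self, sub_zero, hc]
    noncomm_ring
  rw [e1, e2]
  have cnp : Commute n p := hc.symm
  have c : Commute n (1 - p - p - n) :=
    (((Commute.one_right n).sub_right cnp).sub_right cnp).sub_right (Commute.refl n)
  exact c.isNilpotent_mul_right hn

lemma main_nilpotent {R : Type*} [Ring R] {A B BH : R}
    (hA : IsNilpotent A) (hc : B * BH = BH * B) (hz : BH = BH * B * BH)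
    (hmn : IsNilpotent (B ^ 2 - B * BH))
    (h1 : A * BH = 0) (h2 : (1 - B * BH) * A * B = 0) :
    IsNilpotent ((A + B) ^ 2 - (A + B) ^ 4) := by
  set p : R := B * BH with hpdef
  -- basic facts
  have hp : p * p = p := by
    rw [hpdef]
    conv_lhs => rw [mul_assoc, ← mul_assoc BH B BH, ← hz]
  have hpB : p * B = B * p := by
    rw [hpdef, mul_assoc, ← hc, ← mul_assoc]
  have hAp : A * p = 0 := by
    rw [hc, ← mul_assoc, h1, zero_mul]
  have hA1p : A * (1 - p) = A := by rw [mul_sub, mul_one, hAp, sub_zero]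
  have hq : (1 - p) * (1 - p) = 1 - p := by
    have e : (1 - p) * (1 - p) = 1 - p - p + p * p := by noncomm_ring
    rw [e, hp]; abel
  have hqB : (1 - p) * B = B * (1 - p) := by
    have e : (1 - p) * B = B - p * B := by noncomm_ring
    rw [e, hpB]; noncomm_ring
  have hpq : p * (1 - p) = 0 := by rw [mul_sub, mul_one, hp, sub_self]
  have hpB2 : p * B ^ 2 = B ^ 2 * p := by
    have e : p * (B * B) = (B * B) * p := by
      rw [← mul_assoc, hpB, mul_assoc, hpB, ← mul_assoc]
    calc p * B ^ 2 = p * (B * B) := by rw [sq]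
      _ = (B * B) * p := e
      _ = B ^ 2 * p := by rw [← sq]
  -- nilpotency of B^2 - B^4
  have hm : IsNilpotent (B ^ 2 - p) := hmn
  have hmp : p * (B ^ 2 - p) = (B ^ 2 - p) * p := by
    rw [mul_sub, sub_mul, hp, hpB2]
  have hBB : IsNilpotent (B ^ 2 - B ^ 4) := by
    have e : B ^ 2 - B ^ 4 = (p + (B ^ 2 - p)) - (p + (B ^ 2 - p)) ^ 2 := by
      have e2 : p + (B ^ 2 - p) = B ^ 2 := by abel
      rw [e2, ← pow_mul]
    rw [e]
    exact aux_idem_plus_nilp hp hmp hm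
  -- C and its interaction with p
  set C : R := A + B with hC
  have hCp : C * p = B * p := by rw [hC, add_mul, hAp, zero_add]
  have hCpabs : C * p = p * (C * p) := by
    rw [hCp]
    conv_rhs => rw [← mul_assoc, hpB, mul_assoc, hp]
  have hqCp : (1 - p) * C * p = 0 := by
    have e : (1 - p) * C * p = C * p - p * (C * p) := by noncomm_ring
    rw [e, ← hCpabs, sub_self]
  have hqCabs : (1 - p) * C = ((1 - p) * C) * (1 - p) := by
    have e : ((1 - p) * C) * (1 - p) = (1 - p) * C - (1 - p) * C * p := by noncomm_ring
    rw [e, hqCp, sub_zero]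
  -- block facts for D := C^2 - C^4
  have f1 : ∀ n : ℕ, C ^ (n + 1) * p = (B * p) ^ (n + 1) := by
    intro n
    rw [pow_mul_right_absorb hCpabs n, hCp]
  have f2 : ∀ n : ℕ, (1 - p) * C ^ (n + 1) = ((1 - p) * C) ^ (n + 1) :=
    left_mul_pow_absorb hqCabs
  -- (B*p) powers
  have hbp2 : (B * p) * (B * p) = (B * B) * p := by
    rw [mul_assoc, ← mul_assoc p B p, hpB, mul_assoc B p p, hp, ← mul_assoc]
  have hbp2' : (B * p) ^ 2 = B ^ 2 * p := by rw [sq, hbp2, ← sq]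
  have hb2p2 : (B ^ 2 * p) * (B ^ 2 * p) = (B ^ 2 * B ^ 2) * p := by
    rw [mul_assoc, ← mul_assoc p (B ^ 2) p, hpB2, mul_assoc (B ^ 2) p p, hp, ← mul_assoc]
  have hbp4 : (B * p) ^ 4 = B ^ 4 * p := by
    have e : (B * p) ^ 4 = ((B * p) ^ 2) ^ 2 := by rw [← pow_mul]
    rw [e, hbp2', sq (B ^ 2 * p), hb2p2, ← pow_add]
  -- D * p is nilpotent
  have hDp : (C ^ 2 - C ^ 4) * p = (B ^ 2 - B ^ 4) * p := by
    rw [sub_mul, sub_mul]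
    have g1 : C ^ 2 * p = (B * p) ^ 2 := f1 1
    have g3 : C ^ 4 * p = (B * p) ^ 4 := f1 3
    rw [g1, g3, hbp2', hbp4]
  have hDpnil : IsNilpotent ((C ^ 2 - C ^ 4) * p) := by
    rw [hDp]
    have cBp : Commute B p := hpB.symm
    have cBBp : Commute (B ^ 2 - B ^ 4) p := (cBp.pow_left 2).sub_left (cBp.pow_left 4)
    exact cBBp.isNilpotent_mul_right hBB
  -- (1 - p) * D is nilpotent
  have hx : IsNilpotent ((1 - p) * A) := by
    obtain ⟨n, hn⟩ := hA
    refine ⟨n + 1, ?_⟩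
    have habs : (1 - p) * A = ((1 - p) * A) * (1 - p) := by rw [mul_assoc, hA1p]
    rw [← left_mul_pow_absorb habs n, pow_succ, hn, zero_mul, mul_zero]
  have hyB : IsNilpotent ((1 - p) * B) := by
    have e2 : ((1 - p) * B) * ((1 - p) * B) = (B * B) * (1 - p) := by
      rw [hqB, mul_assoc, ← mul_assoc (1 - p) B (1 - p), hqB, mul_assoc B (1 - p) (1 - p),
        hq, ← mul_assoc]
    have e3 : (B * B) * (1 - p) = (B ^ 2 - p) * (1 - p) := by
      rw [sub_mul, hpq, sub_zero, sq]
    have c : Commute (B ^ 2 - p) (1 - p) := (Commute.one_right _).sub_right hmp.symm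
    have hy2 : IsNilpotent (((1 - p) * B) * ((1 - p) * B)) := by
      rw [e2, e3]
      exact c.isNilpotent_mul_right hm
    obtain ⟨k, hk⟩ := hy2
    refine ⟨2 * k, ?_⟩
    rw [pow_mul, sq, hk]
  have hxy0 : ((1 - p) * A) * ((1 - p) * B) = 0 := by
    rw [mul_assoc, ← mul_assoc A (1 - p) B, hA1p, ← mul_assoc]
    exact h2
  have hw : IsNilpotent ((1 - p) * C) := by
    have e : (1 - p) * C = (1 - p) * A + (1 - p) * B := by rw [hC, mul_add]
    rw [e]
    exact isNilpotent_add_of_mul_eq_zero_s12 hxy0 hx hyB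
  have hqD : IsNilpotent ((1 - p) * (C ^ 2 - C ^ 4)) := by
    have e : (1 - p) * (C ^ 2 - C ^ 4) = ((1 - p) * C) ^ 2 - ((1 - p) * C) ^ 4 := by
      rw [mul_sub, f2 1, f2 3]
    have e2 : ((1 - p) * C) ^ 2 - ((1 - p) * C) ^ 4
        = ((1 - p) * C) ^ 2 * (1 - ((1 - p) * C) ^ 2) := by noncomm_ring
    rw [e, e2]
    have hw2 : IsNilpotent (((1 - p) * C) ^ 2) := hw.pow_succ 1
    have c : Commute (((1 - p) * C) ^ 2) (1 - ((1 - p) * C) ^ 2) :=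
      (Commute.one_right _).sub_right (Commute.refl _)
    exact c.isNilpotent_mul_right hw2
  -- assemble via the triangular lemma
  have hD0 : (1 - p) * (C ^ 2 - C ^ 4) * p = 0 := by
    have e : (1 - p) * (C ^ 2 - C ^ 4) * p
        = (((1 - p) * C) ^ 2) * p - (((1 - p) * C) ^ 4) * p := by
      rw [mul_sub, f2 1, f2 3, sub_mul]
    have z2 : (((1 - p) * C) ^ 2) * p = 0 := by
      rw [sq, mul_assoc, hqCp, mul_zero]
    have z4 : (((1 - p) * C) ^ 4) * p = 0 := by
      rw [pow_succ, mul_assoc, hqCp, mul_zero]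
    rw [e, z2, z4, sub_self]
  exact isNilpotent_of_triangular hD0 hDpnil hqD



/-- In any ring, if `t - t^2` is nilpotent then there is an idempotent `e`
commuting with everything that commutes with `t`, with `t - e` nilpotent. -/
lemma exists_idem' {R : Type*} [Ring R] {t : R} (h : IsNilpotent (t - t ^ 2)) :
    ∃ e : R, e * e = e ∧ IsNilpotent (t - e) ∧ ∀ x : R, Commute x t → Commute x e := by
  let S : Subring R := Subring.closure {t}
  letI : CommRing S := Subring.closureCommRingOfComm (by rintro x rfl y rfl; rfl)
  have htS : t ∈ S := Subring.subset_closure rfl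
  set tS : S := ⟨t, htS⟩ with htSdef
  have hnil : IsNilpotent (tS - tS ^ 2) := by
    obtain ⟨n, hn⟩ := h
    exact ⟨n, by ext; push_cast; exact hn⟩
  obtain ⟨eS, he, hne⟩ := exists_idem_comm hnil
  refine ⟨(eS : R), ?_, ?_, ?_⟩
  · exact_mod_cast congrArg (Subtype.val) he
  · obtain ⟨n, hn⟩ := hne
    exact ⟨n, by have := congrArg (Subtype.val) hn; push_cast at this; exact this⟩
  · intro x hx
    have hle : S ≤ Subring.centralizer ({x} : Set R) := by
      rw [Subring.closure_le]
      rintro y rfl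
      rw [SetLike.mem_coe, Subring.mem_centralizer_iff]
      rintro z rfl
      exact hx
    have h2 := hle eS.2
    rw [Subring.mem_centralizer_iff] at h2
    exact h2 x rfl




lemma hasHiranoInverse_of_isNilpotent {R : Type*} [Ring R] {a : R}
    (h : IsNilpotent (a ^ 2 - a ^ 4)) : HasHiranoInverse a := by
  have h' : IsNilpotent (a ^ 2 - (a ^ 2) ^ 2) := by
    rw [← pow_mul]; exact h
  obtain ⟨e, he, hne, hcomm⟩ := exists_idem' h'
  have cae : Commute a e := hcomm a ((Commute.refl a).pow_right 2)
  have can : Commute a (a ^ 2 - e) := ((Commute.refl a).pow_right 2).sub_right cae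
  have cen : Commute e (a ^ 2 - e) :=
    (hcomm (a ^ 2) ((Commute.refl (a ^ 2)))).symm.sub_right (Commute.refl e)
  have hunit : IsUnit (1 + (a ^ 2 - e)) := hne.isUnit_one_add
  set V : Rˣ := hunit.unit with hV
  have hVval : (V : R) = 1 + (a ^ 2 - e) := hunit.unit_spec
  have caV : Commute a (V : R) := by
    rw [hVval]; exact (Commute.one_right a).add_right can
  have ceV : Commute e (V : R) := by
    rw [hVval]; exact (Commute.one_right e).add_right cen
  have caVi : Commute a ((V⁻¹ : Rˣ) : R) := caV.units_inv_right
  have ceVi : Commute e ((V⁻¹ : Rˣ) : R) := ceV.units_inv_right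
  set z : R := a * (e * ((V⁻¹ : Rˣ) : R)) with hz
  have key : a * z = e := by
    have h1 : a * z = a ^ 2 * (e * ((V⁻¹ : Rˣ) : R)) := by
      rw [hz]; noncomm_ring
    have h2 : a ^ 2 * e = (V : R) * e := by
      rw [hVval, add_mul, one_mul, sub_mul, he]
      abel
    calc a * z = a ^ 2 * e * ((V⁻¹ : Rˣ) : R) := by rw [h1, ← mul_assoc]
      _ = e * (V : R) * ((V⁻¹ : Rˣ) : R) := by rw [h2, ceV.eq]
      _ = e * ((V : R) * ((V⁻¹ : Rˣ) : R)) := by rw [mul_assoc]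
      _ = e := by rw [V.mul_inv, mul_one]
  have caz : Commute a z := (Commute.refl a).mul_right (cae.mul_right caVi)
  have h3 : e * z = z := by
    rw [hz]
    calc e * (a * (e * ((V⁻¹ : Rˣ) : R)))
        = a * (e * (e * ((V⁻¹ : Rˣ) : R))) := by rw [← mul_assoc, ← cae.eq, mul_assoc]
      _ = a * (e * ((V⁻¹ : Rˣ) : R)) := by rw [← mul_assoc e e, he]
  refine ⟨z, caz.eq, ?_, ?_⟩
  · calc z = e * z := h3.symm
      _ = (a * z) * z := by rw [key]
      _ = z * a * z := by rw [caz.eq]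
  · rw [key]; exact hne

variable {X : Type*} [NormedAddCommGroup X] [NormedSpace ℂ X] [CompleteSpace X]

theorem hirano_add_nilpotent (A B BH : X →L[ℂ] X)
    (hA : IsNilpotent A)
    (hBH : B * BH = BH * B ∧ BH = BH * B * BH ∧ IsNilpotent (B ^ 2 - B * BH))
    (h1 : A * BH = 0)
    (h2 : (1 - B * BH) * A * B = 0) :
    HasHiranoInverse (A + B) := by
  obtain ⟨hc, hz, hmn⟩ := hBH
  exact hasHiranoInverse_of_isNilpotent (main_nilpotent hA hc hz hmn h1 h2)
end

section
/- Let X be a complex Banach space and L(X) the Banach algebra of bounded linear operators on X. If A, D ∈ L(X) have Hirano inverses, then for any C ∈ L(X) the lower-triangular operator matrix M = [[A, 0], [C, D]] has a Hirano inverse in M₂(L(X)). -/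
lemma aux_sd {R : Type*} [CommRing R] {b : R} (h : IsNilpotent (b - b^2)) :
    ∃ z : R, z = z * b * z ∧ IsNilpotent (b - b * z) := by
  obtain ⟨n, hn⟩ := h
  have hN : (b - b^2)^(n+1) = 0 := by rw [pow_succ, hn, zero_mul]
  set N := n + 1 with hNdef
  have key : ∀ c : R, c - c^2 ∈ nilradical R → ∀ k : ℕ, c^(k+1) - c ∈ nilradical R := by
    intro c hc k
    induction k with
    | zero => simpa using (nilradical R).zero_mem
    | succ k ih =>
      have hx : c^(k+1+1) - c = c * (c^(k+1) - c) + (-(c - c^2)) := by ring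
      rw [hx]
      exact add_mem (Ideal.mul_mem_left _ _ ih) (neg_mem hc)
  have hbb : b - b^2 ∈ nilradical R := mem_nilradical.2 ⟨n, hn⟩
  have h1b : (1-b) - (1-b)^2 ∈ nilradical R := by
    have : (1-b) - (1-b)^2 = b - b^2 := by ring
    rw [this]; exact hbb
  set t : R := b^N + (1-b)^N with htdef
  have ht1 : t - 1 ∈ nilradical R := by
    have : t - 1 = (b^N - b) + ((1-b)^N - (1-b)) := by rw [htdef]; ring
    rw [this]
    exact add_mem (key b hbb n) (key (1-b) h1b n)
  have hu : IsUnit t := by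
    have := (mem_nilradical.1 ht1).isUnit_one_add
    simpa using this
  obtain ⟨u, hu⟩ := hu.exists_right_inv
  have hbN : b^N * (1-b)^N = 0 := by
    rw [← mul_pow]
    have : b * (1-b) = b - b^2 := by ring
    rw [this, hN]
  set e : R := b^N * u with hedef
  have he : e * e = e := by
    rw [hedef]
    linear_combination (-(u^2)) * hbN + (b^N * u) * hu
  have hbe : b - e ∈ nilradical R := by
    have hx : b - e = (b*(t-1) + (b - b^N)) * u := by
      rw [hedef]; linear_combination (-b) * hu
    rw [hx]
    refine Ideal.mul_mem_right _ _ (add_mem (Ideal.mul_mem_left _ _ ht1) ?_)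
    simpa using neg_mem (key b hbb n)
  have hm' : (1-b)*e ∈ nilradical R := by
    have hx : (1-b)*e = -(1-b)*(b - e) + (b - b^2) := by ring
    rw [hx]
    exact add_mem (Ideal.mul_mem_left _ _ hbe) hbb
  have hs : IsUnit (1 - (1-b)*e) := by
    have := (mem_nilradical.1 hm').neg.isUnit_one_add
    simpa [sub_eq_add_neg] using this
  obtain ⟨w, hw⟩ := hs.exists_right_inv
  clear_value t e
  refine ⟨e * w, ?_, ?_⟩
  · linear_combination (-(w + e*w*(1-b)*w)) * he + (-(e*w*e)) * hw
  · have hx : b * (e * w) = e := by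
      linear_combination ((1-b)*w) * he + e * hw
    rw [hx]
    exact mem_nilradical.1 hbe

lemma hirano_aux {S R : Type*} [CommRing S] [Ring R] (f : S →+* R)
    (hinj : Function.Injective f) (a : S) (h : IsNilpotent (f a - (f a)^3)) :
    ∃ z : S, f a * f z = f z * f a ∧ f z = f z * f a * f z ∧
      IsNilpotent ((f a) ^ 2 - f a * f z) := by
  have hb : IsNilpotent ((a^2 : S) - (a^2)^2) := by
    have hmap : f ((a^2 : S) - (a^2)^2) = (f a - (f a)^3) * f a := by
      push_cast [map_sub, map_pow]
      noncomm_ring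
    have hc : Commute (f a - (f a)^3) (f a) :=
      (Commute.refl (f a)).sub_left ((Commute.refl (f a)).pow_left 3)
    have hnil : IsNilpotent (f ((a^2 : S) - (a^2)^2)) := by
      rw [hmap]; exact hc.isNilpotent_mul_right h
    obtain ⟨n, hn⟩ := hnil
    exact ⟨n, hinj (by rw [map_pow, hn, map_zero])⟩
  obtain ⟨z', hz1, hz2⟩ := aux_sd hb
  refine ⟨a * z', ?_, ?_, ?_⟩
  · rw [← map_mul, ← map_mul, mul_comm]
  · have hx : (a * z' : S) = (a * z') * a * (a * z') := by linear_combination a * hz1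
    calc f (a * z') = f ((a * z') * a * (a * z')) := by rw [← hx]
    _ = f (a * z') * f a * f (a * z') := by rw [map_mul, map_mul]
  · have hmap : f ((a^2 : S) - a^2 * z') = (f a)^2 - f a * f (a * z') := by
      simp [map_sub, map_pow, map_mul, pow_two, mul_assoc]
    rw [← hmap]
    obtain ⟨n, hn⟩ := hz2
    exact ⟨n, by rw [← map_pow, hn, map_zero]⟩

lemma cube_nilpotent {R : Type*} [Ring R] {a z : R}
    (hc : a * z = z * a) (hz : z = z * a * z) (hn : IsNilpotent (a ^ 2 - a * z)) :
    IsNilpotent (a - a ^ 3) := by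
  obtain ⟨e, he_def⟩ : ∃ e, e = a * z := ⟨_, rfl⟩
  obtain ⟨n, hn_def⟩ : ∃ n, n = a ^ 2 - a * z := ⟨_, rfl⟩
  rw [← hn_def] at hn
  have hee : e * e = e := by
    rw [he_def]
    calc a * z * (a * z) = a * (z * a * z) := by noncomm_ring
    _ = a * z := by rw [← hz]
  have cae : Commute a e := by
    show a * e = e * a
    rw [he_def]
    calc a * (a * z) = a * (z * a) := by rw [hc]
    _ = a * z * a := by noncomm_ring
  have cen : Commute e n := by
    have hne : n = a ^ 2 - e := by rw [hn_def, he_def]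
    rw [hne]
    exact ((cae.symm.pow_right 2).sub_right (Commute.refl e))
  have can : Commute a n := by
    have hne : n = a ^ 2 - e := by rw [hn_def, he_def]
    rw [hne]
    exact ((Commute.refl a).pow_right 2).sub_right cae
  have hsum : e + n = a ^ 2 := by rw [he_def, hn_def]; abel
  have h4 : IsNilpotent (a * n) := can.isNilpotent_mul_left hn
  have h5 : IsNilpotent (a * (1 - e)) := by
    have hsq : (a * (1 - e)) * (a * (1 - e)) = n * (1 - e) := by
      have c1 : Commute a (1 - e) := (Commute.one_right a).sub_right cae
      calc (a * (1 - e)) * (a * (1 - e)) = a ^ 2 * ((1 - e) * (1 - e)) := by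
            rw [pow_two]
            calc a * (1 - e) * (a * (1 - e)) = a * ((1 - e) * a) * (1 - e) := by noncomm_ring
            _ = a * (a * (1 - e)) * (1 - e) := by rw [← c1.eq]
            _ = a * a * ((1 - e) * (1 - e)) := by noncomm_ring
      _ = a ^ 2 * (1 - e) := by
            congr 1
            calc (1 - e) * (1 - e) = 1 - e - e + e * e := by noncomm_ring
            _ = 1 - e := by rw [hee]; abel
      _ = (e + n) * (1 - e) := by rw [hsum]
      _ = n * (1 - e) + (e - e * e) := by noncomm_ring
      _ = n * (1 - e) := by rw [hee]; abel
    have hnil : IsNilpotent (n * (1 - e)) :=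
      ((Commute.one_right n).sub_right cen.symm).isNilpotent_mul_right hn
    obtain ⟨k, hk⟩ := hnil
    exact ⟨2 * k, by rw [pow_mul, pow_two, hsq, hk]⟩
  have h3 : a - a ^ 3 = a * (1 - e) - a * n := by
    have : a ^ 3 = a * (e + n) := by rw [hsum]; noncomm_ring
    rw [this]; noncomm_ring
  rw [h3]
  have hcomm2 : Commute (a * (1 - e)) (a * n) := by
    have c1 : Commute a (1 - e) := (Commute.one_right a).sub_right cae
    have c2 : Commute (1 - e) n := (Commute.one_left n).sub_left cen
    exact (((Commute.refl a).mul_right can).mul_left (c1.symm.mul_right c2))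
  exact hcomm2.isNilpotent_sub h5 h4

lemma tri_nil {R : Type*} [Ring R] {x y : R} (hx : IsNilpotent x) (hy : IsNilpotent y)
    (c : R) : IsNilpotent (!![x, 0; c, y]) := by
  obtain ⟨p, hp⟩ := hx
  obtain ⟨q, hq⟩ := hy
  have key : ∀ k : ℕ, ∃ d : R, (!![x, 0; c, y]) ^ k = !![x ^ k, 0; d, y ^ k] := by
    intro k
    induction k with
    | zero => exact ⟨0, by simp [Matrix.one_fin_two]⟩
    | succ k ih =>
      obtain ⟨d, hd⟩ := ih
      refine ⟨d * x + y ^ k * c, ?_⟩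
      rw [pow_succ, hd]
      simp [Matrix.mul_fin_two, pow_succ]
  obtain ⟨d, hd⟩ := key (p + q)
  have h0 : x ^ (p + q) = 0 := by rw [pow_add, hp, zero_mul]
  have h1 : y ^ (p + q) = 0 := by rw [pow_add, hq, mul_zero]
  refine ⟨(p + q) * 2, ?_⟩
  rw [pow_mul, hd, h0, h1, pow_two]
  ext i j
  fin_cases i <;> fin_cases j <;> simp [Matrix.mul_fin_two]

lemma hirano_of_nilpotent_s13 {R : Type*} [Ring R] {a : R} (h : IsNilpotent (a - a^3)) :
    ∃ z : R, a * z = z * a ∧ z = z * a * z ∧ IsNilpotent (a ^ 2 - a * z) := by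
  letI : CommRing (Algebra.adjoin ℤ ({a} : Set R)) :=
    Algebra.adjoinCommRingOfComm ℤ (by
      rintro x hx y hy
      rw [Set.mem_singleton_iff] at hx hy
      subst hx; subst hy; rfl)
  have ha : a ∈ Algebra.adjoin ℤ ({a} : Set R) := Algebra.subset_adjoin rfl
  obtain ⟨z, h1, h2, h3⟩ :=
    hirano_aux ((Algebra.adjoin ℤ ({a} : Set R)).val.toRingHom) Subtype.val_injective
      ⟨a, ha⟩ (by simpa using h)
  exact ⟨z, by simpa using h1, by simpa using h2, by simpa using h3⟩

variable {X : Type*} [NormedAddCommGroup X] [NormedSpace ℂ X] [CompleteSpace X]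

theorem hirano_triangular (A D : X →L[ℂ] X)
    (hA : HasHiranoInverse A) (hD : HasHiranoInverse D) (C : X →L[ℂ] X) :
    HasHiranoInverse (!![A, 0; C, D] : Matrix (Fin 2) (Fin 2) (X →L[ℂ] X)) := by
  obtain ⟨zA, hA1, hA2, hA3⟩ := hA
  obtain ⟨zD, hD1, hD2, hD3⟩ := hD
  have hA' : IsNilpotent (A - A ^ 3) := cube_nilpotent hA1 hA2 hA3
  have hD' : IsNilpotent (D - D ^ 3) := cube_nilpotent hD1 hD2 hD3
  apply hirano_of_nilpotent_s13
  have hM : (!![A, 0; C, D] : Matrix (Fin 2) (Fin 2) (X →L[ℂ] X)) -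
      (!![A, 0; C, D]) ^ 3 =
      !![A - A ^ 3, 0; C - (C * A ^ 2 + D * C * A + D ^ 2 * C), D - D ^ 3] := by
    have : (!![A, 0; C, D] : Matrix (Fin 2) (Fin 2) (X →L[ℂ] X)) ^ 3 =
        !![A ^ 3, 0; C * A ^ 2 + D * C * A + D ^ 2 * C, D ^ 3] := by
      rw [pow_succ, pow_succ, pow_one]
      simp [Matrix.mul_fin_two]
      exact ⟨by noncomm_ring, by noncomm_ring, by noncomm_ring⟩
    rw [this]
    ext i j
    fin_cases i <;> fin_cases j <;> simp
  rw [hM]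
  exact tri_nil hA' hD' _
end

section
/- Let X be a complex Banach space and L(X) the Banach algebra of bounded linear operators on X. Let A, B ∈ L(X) have Hirano inverses A^H and B^H. If A^H B = 0, A B^H = 0 and B^π A B A^π = 0, where A^π = I − A·A^H and B^π = I − B·B^H, then A + B has a Hirano inverse. -/
section CommPart

variable {R : Type*} [CommRing R]

private def newt (e : R) : ℕ → R
  | 0 => e
  | k+1 => 3*(newt e k)^2 - 2*(newt e k)^3

private lemma newt_sub_sq (e : R) : ∀ k : ℕ,
    ∃ c : R, newt e k - (newt e k)^2 = (e - e^2)^(2^k) * c := by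
  intro k
  induction k with
  | zero => exact ⟨1, by simp [newt]⟩
  | succ k ih =>
    obtain ⟨c, hc⟩ := ih
    refine ⟨c^2*(3 + 4*((e - e^2)^(2^k)*c)), ?_⟩
    show (3*(newt e k)^2 - 2*(newt e k)^3) - (3*(newt e k)^2 - 2*(newt e k)^3)^2 = _
    have key : (3*(newt e k)^2 - 2*(newt e k)^3) - (3*(newt e k)^2 - 2*(newt e k)^3)^2
        = (newt e k - (newt e k)^2)^2 * (3 + 4*(newt e k - (newt e k)^2)) := by ring
    rw [key, hc, pow_succ 2 k, pow_mul]
    ring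

private lemma newt_sub_base (e : R) (h : IsNilpotent (e - e^2)) (k : ℕ) :
    IsNilpotent (newt e k - e) := by
  induction k with
  | zero => simp [newt]
  | succ k ih =>
    have h1 : newt e (k+1) - e = (newt e k - (newt e k)^2)*(2*(newt e k) - 1)
        + (newt e k - e) := by
      show (3*(newt e k)^2 - 2*(newt e k)^3) - e = _
      ring
    obtain ⟨c, hc⟩ := newt_sub_sq e k
    have h2 : IsNilpotent (newt e k - (newt e k)^2) := by
      rw [hc]
      exact (Commute.all _ _).isNilpotent_mul_right
        (h.pow_of_pos (Nat.pow_pos (by norm_num : (0:ℕ) < 2)).ne')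
    rw [h1]
    exact (Commute.all _ _).isNilpotent_add
      ((Commute.all _ _).isNilpotent_mul_right h2) ih

private lemma hh_comm {a : R} (h : IsNilpotent (a - a^3)) :
    ∃ z : R, a * z = z * a ∧ z = z * a * z ∧ IsNilpotent (a ^ 2 - a * z) := by
  have hd : IsNilpotent (a^2 - (a^2)^2) := by
    have heq : a^2 - (a^2)^2 = a * (a - a^3) := by ring
    rw [heq]; exact (Commute.all _ _).isNilpotent_mul_left h
  obtain ⟨n, hn⟩ := hd
  set e := a^2 with he
  set E := newt e n with hE
  have hidE : E^2 = E := by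
    obtain ⟨c, hc⟩ := newt_sub_sq e n
    have h2n : (e - e^2)^(2^n) = 0 := by
      have hle : n ≤ 2^n := Nat.le_of_lt (Nat.lt_two_pow_self (n := n))
      calc (e - e^2)^(2^n) = (e - e^2)^n * (e - e^2)^(2^n - n) := by
            rw [← pow_add, Nat.add_sub_cancel' hle]
        _ = 0 := by rw [hn, zero_mul]
    have h0 : E - E^2 = 0 := by rw [hc, h2n, zero_mul]
    exact (sub_eq_zero.mp h0).symm
  have hw : IsNilpotent (e - E) := by
    have := (newt_sub_base e ⟨n, hn⟩ n).neg
    rwa [neg_sub] at this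
  have hu : IsUnit (1 + (e - E)) := hw.isUnit_one_add
  obtain ⟨U, hU⟩ := hu
  have keyEq : e * E = E * ↑U := by
    rw [hU]; linear_combination hidE
  have key : e * E * ↑U⁻¹ = E := by
    rw [keyEq, mul_assoc, Units.mul_inv, mul_one]
  have haz : a * (a * E * ↑U⁻¹) = E := by
    rw [show a * (a * E * ↑U⁻¹) = e * E * ↑U⁻¹ by rw [he]; ring]; exact key
  refine ⟨a * E * ↑U⁻¹, mul_comm _ _, ?_, ?_⟩
  · calc a * E * ↑U⁻¹ = a * E^2 * ↑U⁻¹ := by rw [hidE]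
      _ = (a*E*↑U⁻¹) * E := by ring
      _ = (a*E*↑U⁻¹) * (a * (a*E*↑U⁻¹)) := by rw [haz]
      _ = (a*E*↑U⁻¹) * a * (a*E*↑U⁻¹) := by ring
  · rw [haz]; exact hw

end CommPart

private lemma hh {R : Type*} [Ring R] {a : R} (h : IsNilpotent (a - a^3)) :
    HasHiranoInverse a := by
  obtain ⟨n, hn⟩ := h
  set g : Polynomial ℤ := (Polynomial.X - Polynomial.X^3)^n with hg
  set I : Ideal (Polynomial ℤ) := Ideal.span {g} with hI
  set x : Polynomial ℤ ⧸ I := Ideal.Quotient.mk I Polynomial.X with hx'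
  have hx : IsNilpotent (x - x^3) := by
    refine ⟨n, ?_⟩
    have heq : (x - x^3)^n = Ideal.Quotient.mk I g := by
      rw [hg, map_pow, map_sub, map_pow]
    rw [heq, Ideal.Quotient.eq_zero_iff_mem]
    exact Ideal.subset_span (Set.mem_singleton _)
  obtain ⟨z, hz1, hz2, hz3⟩ := hh_comm hx
  have hker : ∀ p ∈ I, (Polynomial.aeval a : Polynomial ℤ →ₐ[ℤ] R).toRingHom p = 0 := by
    intro p hp
    rw [hI, Ideal.mem_span_singleton] at hp
    obtain ⟨c, rfl⟩ := hp
    simp only [AlgHom.toRingHom_eq_coe, RingHom.coe_coe, map_mul, hg, map_pow, map_sub,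
      Polynomial.aeval_X, hn, zero_mul]
  set φ : Polynomial ℤ ⧸ I →+* R := Ideal.Quotient.lift I _ hker with hφ
  have hφx : φ x = a := by
    rw [hφ, hx', Ideal.Quotient.lift_mk]
    simp
  refine ⟨φ z, ?_, ?_, ?_⟩
  · have := congrArg φ hz1; rwa [map_mul, map_mul, hφx] at this
  · have := congrArg φ hz2; rwa [map_mul, map_mul, hφx] at this
  · have := hz3.map φ
    rwa [map_sub, map_pow, map_mul, hφx] at this



section RingLemmas
variable {R : Type*} [Ring R]



private lemma powRight {T E : R} (h : T * E = E * T * E) :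
    ∀ k : ℕ, T ^ (k+1) * E = (E * T * E) ^ (k+1) := by
  intro k
  induction k with
  | zero => simpa using h
  | succ k ih =>
    calc T ^ (k+1+1) * E = T ^ (k+1) * (T * E) := by rw [pow_succ, mul_assoc]
      _ = T ^ (k+1) * (E * (T * E)) := congrArg _ (h.trans (mul_assoc E T E))
      _ = (T ^ (k+1) * E) * (T * E) := by simp only [mul_assoc]
      _ = (E*T*E)^(k+1) * (T*E) := by rw [ih]
      _ = (E*T*E)^(k+1) * (E*T*E) := congrArg _ h
      _ = (E*T*E)^(k+1+1) := by rw [← pow_succ]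

private lemma powLeft {T E : R} (h : E * T = E * T * E) :
    ∀ k : ℕ, E * T ^ (k+1) = (E * T * E) ^ (k+1) := by
  intro k
  induction k with
  | zero => simpa using h
  | succ k ih =>
    calc E * T ^ (k+1+1) = (E * T) * T ^ (k+1) := by rw [pow_succ', ← mul_assoc]
      _ = (E*T*E) * T^(k+1) := congrArg (· * T^(k+1)) h
      _ = (E*T) * (E * T^(k+1)) := by simp only [mul_assoc]
      _ = (E*T) * (E*T*E)^(k+1) := by rw [ih]
      _ = (E*T*E) * (E*T*E)^(k+1) := congrArg (· * (E*T*E)^(k+1)) h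
      _ = (E*T*E)^(k+1+1) := by rw [← pow_succ']

private lemma blockNil {E X : R} (h0 : (1-E)*X*E = 0)
    (h1 : IsNilpotent (E*X*E)) (h2 : IsNilpotent ((1-E)*X*(1-E))) : IsNilpotent X := by
  have hXE : X * E = E * X * E := by
    have h : X*E - E*X*E = (1-E)*X*E := by noncomm_ring
    rw [h0] at h
    exact (sub_eq_zero.mp h)
  have hFX : (1-E)*X = (1-E)*X*(1-E) := by
    have h : (1-E)*X - (1-E)*X*(1-E) = (1-E)*X*E := by noncomm_ring
    rw [h0] at h
    exact (sub_eq_zero.mp h)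
  obtain ⟨m, hm⟩ := h1
  obtain ⟨p, hp⟩ := h2
  have key1 : X^(m+1) * E = 0 := by
    rw [powRight hXE m, pow_succ, hm, zero_mul]
  have key2 : (1-E)*X^(p+1) = 0 := by
    rw [powLeft hFX p, pow_succ, hp, zero_mul]
  refine ⟨(m+1)+(p+1), ?_⟩
  have e2 : X^(p+1) = E * X^(p+1) := by
    have h : X^(p+1) - E*X^(p+1) = (1-E)*X^(p+1) := by noncomm_ring
    rw [key2] at h
    exact (sub_eq_zero.mp h)
  rw [pow_add, e2, ← mul_assoc, key1, zero_mul]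

private lemma triCube {E T : R} (hE : E*E = E) (h0 : (1-E)*T*E = 0)
    (h1 : IsNilpotent (E*T*E - (E*T*E)^3))
    (h2 : IsNilpotent ((1-E)*T*(1-E) - ((1-E)*T*(1-E))^3)) :
    IsNilpotent (T - T^3) := by
  have hz : (1-E)*E = 0 := by rw [sub_mul, one_mul, hE, sub_self]
  have hzE : E*(1-E) = 0 := by rw [mul_sub, mul_one, hE, sub_self]
  have hTE : T * E = E * T * E := by
    have h : T*E - E*T*E = (1-E)*T*E := by noncomm_ring
    rw [h0] at h; exact (sub_eq_zero.mp h)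
  have hFT : (1-E)*T = (1-E)*T*(1-E) := by
    have h : (1-E)*T - (1-E)*T*(1-E) = (1-E)*T*E := by noncomm_ring
    rw [h0] at h; exact (sub_eq_zero.mp h)
  -- cross vanishing
  have hcross : ((1-E)*T*(1-E)) * (E*T*E) = 0 := by
    calc ((1-E)*T*(1-E)) * (E*T*E) = (1-E)*T*(((1-E)*E)*(T*E)) := by
          simp only [mul_assoc]
      _ = 0 := by rw [hz, zero_mul, mul_zero]
  apply blockNil (E := E) (X := T - T^3)
  · -- (1-E)*(T-T^3)*E = 0
    have hT3 : (1-E)*T^3*E = 0 := by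
      have expand : (1-E)*T^3*E = ((1-E)*T) * (T^2 * E) := by
        rw [pow_succ']
        simp only [mul_assoc]
      rw [expand, hFT, powRight hTE 1]
      calc ((1-E)*T*(1-E)) * ((E*T*E)^2) = (((1-E)*T*(1-E)) * (E*T*E)) * (E*T*E) := by
            rw [pow_two, ← mul_assoc]
        _ = 0 := by rw [hcross, zero_mul]
    have : (1-E)*(T - T^3)*E = (1-E)*T*E - (1-E)*T^3*E := by noncomm_ring
    rw [this, h0, hT3, sub_zero]
  · -- E*(T-T^3)*E
    have hEcube : E*(E*T*E)^3 = (E*T*E)^3 := by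
      have hEE : E*(E*T*E) = E*T*E := by
        calc E*(E*T*E) = (E*E)*T*E := by simp only [mul_assoc]
          _ = E*T*E := by rw [hE]
      calc E*(E*T*E)^3 = E*((E*T*E)*(E*T*E)^2) := by rw [pow_succ']
        _ = (E*(E*T*E))*(E*T*E)^2 := by rw [← mul_assoc]
        _ = (E*T*E)*(E*T*E)^2 := by rw [hEE]
        _ = (E*T*E)^3 := by rw [← pow_succ']
    have : E*(T - T^3)*E = E*T*E - (E*T*E)^3 := by
      have expand : E*(T - T^3)*E = E*T*E - E*(T^3*E) := by noncomm_ring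
      rw [expand, powRight hTE 2, hEcube]
    rw [this]; exact h1
  · -- (1-E)*(T-T^3)*(1-E)
    have hF' : (1-E)*(1-E) = 1-E := by
      have h : (1-E)*(1-E) = 1 - E - E + E*E := by noncomm_ring
      rw [h, hE]; abel
    have hZcube : ((1-E)*T*(1-E))^3 * (1-E) = ((1-E)*T*(1-E))^3 := by
      have hZF : ((1-E)*T*(1-E))*(1-E) = (1-E)*T*(1-E) := by
        calc ((1-E)*T*(1-E))*(1-E) = (1-E)*T*((1-E)*(1-E)) := by simp only [mul_assoc]
          _ = (1-E)*T*(1-E) := by rw [hF']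
      calc ((1-E)*T*(1-E))^3 * (1-E) = ((1-E)*T*(1-E))^2 * (((1-E)*T*(1-E))*(1-E)) := by
            rw [pow_succ, mul_assoc]
        _ = ((1-E)*T*(1-E))^2 * ((1-E)*T*(1-E)) := by rw [hZF]
        _ = ((1-E)*T*(1-E))^3 := by rw [← pow_succ]
    have : (1-E)*(T - T^3)*(1-E) = (1-E)*T*(1-E) - ((1-E)*T*(1-E))^3 := by
      have expand : (1-E)*(T - T^3)*(1-E) = (1-E)*T*(1-E) - ((1-E)*T^3)*(1-E) := by
        noncomm_ring
      rw [expand, powLeft hFT 2, hZcube]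
    rw [this]; exact h2

private lemma nil_add_of_mul_eq_zero {u v : R} (huv : u*v = 0)
    (hu : IsNilpotent u) (hv : IsNilpotent v) : IsNilpotent (u+v) := by
  obtain ⟨k, hk⟩ := hu
  obtain ⟨l, hl⟩ := hv
  have hA : ∀ n : ℕ, u * (u+v)^n = u^(n+1) := by
    intro n
    induction n with
    | zero => simp
    | succ n ih =>
      calc u*(u+v)^(n+1) = (u*(u+v))*(u+v)^n := by rw [pow_succ', ← mul_assoc]
        _ = (u*u)*(u+v)^n := by rw [mul_add, huv, add_zero]
        _ = u*(u*(u+v)^n) := by rw [mul_assoc]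
        _ = u*u^(n+1) := by rw [ih]
        _ = u^(n+1+1) := by rw [← pow_succ']
  have hB : ∀ n : ℕ, (u+v)^(n+1) = v*(u+v)^n + u^(n+1) := by
    intro n
    rw [pow_succ', add_mul, hA n, add_comm]
  have hC : ∀ m : ℕ, (u+v)^(m+k) = v^m * (u+v)^k := by
    intro m
    induction m with
    | zero => simp
    | succ m ih =>
      have harith : m+1+k = (m+k)+1 := by omega
      rw [harith, hB, ih, ← mul_assoc, ← pow_succ']
      have huk : u^(m+k+1) = u^(m+1) * u^k := by rw [← pow_add]; congr 1; omega
      rw [huk, hk, mul_zero, add_zero]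
  exact ⟨l + k, by rw [hC l, hl, zero_mul]⟩

private lemma idem_pow {p : R} (h : p*p = p) : ∀ n : ℕ, p^(n+1) = p := by
  intro n
  induction n with
  | zero => simp
  | succ n ih => rw [pow_succ, ih, h]


private lemma idem_compl {p : R} (h : p*p = p) : (1-p)*(1-p) = 1-p := by
  have e : (1-p)*(1-p) = 1 - p - p + p*p := by noncomm_ring
  rw [e, h]; abel

private lemma pow_q_mul {q x : R} (h : x*q = x) : ∀ n : ℕ, (q*x)^(n+1) = q*x^(n+1) := by
  have hx : ∀ n : ℕ, x^(n+1)*q = x^(n+1) := by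
    intro n; rw [pow_succ, mul_assoc, h]
  intro n
  induction n with
  | zero => simp
  | succ n ih =>
    calc (q*x)^(n+1+1) = (q*x)^(n+1)*(q*x) := by rw [pow_succ]
      _ = (q*x^(n+1))*(q*x) := by rw [ih]
      _ = q*((x^(n+1)*q)*x) := by simp only [mul_assoc]
      _ = q*(x^(n+1)*x) := by rw [hx]
      _ = q*x^(n+1+1) := by rw [← pow_succ]

private lemma pow_mul_q {q x : R} (h : q*x = x) : ∀ n : ℕ, (x*q)^(n+1) = x^(n+1)*q := by
  have hx : ∀ n : ℕ, q*x^(n+1) = x^(n+1) := by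
    intro n; rw [pow_succ', ← mul_assoc, h]
  intro n
  induction n with
  | zero => simp
  | succ n ih =>
    calc (x*q)^(n+1+1) = (x*q)*(x*q)^(n+1) := by rw [pow_succ']
      _ = (x*q)*(x^(n+1)*q) := by rw [ih]
      _ = x*((q*x^(n+1))*q) := by simp only [mul_assoc]
      _ = x*(x^(n+1)*q) := by rw [hx]
      _ = (x*x^(n+1))*q := by simp only [mul_assoc]
      _ = x^(n+1+1)*q := by rw [← pow_succ']

private lemma nil_sub_cube {g : R} (h : IsNilpotent g) : IsNilpotent (g - g^3) := by
  have e : g - g^3 = g*(1 - g^2) := by noncomm_ring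
  rw [e]
  exact ((Commute.one_right g).sub_right ((Commute.refl g).pow_right 2)).isNilpotent_mul_right h

private theorem main_ring (A B AH BH : R)
    (hAH : A * AH = AH * A ∧ AH = AH * A * AH ∧ IsNilpotent (A ^ 2 - A * AH))
    (hBH : B * BH = BH * B ∧ BH = BH * B * BH ∧ IsNilpotent (B ^ 2 - B * BH))
    (h1 : AH * B = 0) (h2 : A * BH = 0)
    (h3 : (1 - B * BH) * A * B * (1 - A * AH) = 0) :
    IsNilpotent ((A + B) - (A + B)^3) := by
  obtain ⟨hAH1, hAH2, nWA⟩ := hAH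
  obtain ⟨hBH1, hBH2, nWB⟩ := hBH
  set P := A * AH with hP
  set Q := B * BH with hQ
  -- basic facts about P
  have f_PP : P * P = P := by
    rw [hP]
    have e : (A*AH)*(A*AH) = A*(AH*A*AH) := by simp only [mul_assoc]
    rw [e, ← hAH2]
  have f_PA : P * A = A * P := by rw [hP, mul_assoc, ← hAH1, ← mul_assoc]
  have cPA : Commute P A := f_PA
  have f_QQ : Q * Q = Q := by
    rw [hQ]
    have e : (B*BH)*(B*BH) = B*(BH*B*BH) := by simp only [mul_assoc]
    rw [e, ← hBH2]
  have f_QB : Q * B = B * Q := by rw [hQ, mul_assoc, ← hBH1, ← mul_assoc]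
  have cQB : Commute Q B := f_QB
  -- cross facts
  have f_PB : P * B = 0 := by rw [hP, mul_assoc, h1, mul_zero]
  have f_AQ : A * Q = 0 := by rw [hQ, hQ.symm.trans hBH1, ← mul_assoc, h2, zero_mul]
  have f_PQ : P * Q = 0 := by
    rw [hP, hQ]
    calc (A*AH)*(B*BH) = A*((AH*B)*BH) := by simp only [mul_assoc]
      _ = 0 := by rw [h1, zero_mul, mul_zero]
  have f_P1P : P*(1-P) = 0 := by rw [mul_sub, mul_one, f_PP, sub_self]
  have f_Q1Q : Q*(1-Q) = 0 := by rw [mul_sub, mul_one, f_QQ, sub_self]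
  have f_1P1P : (1-P)*(1-P) = 1-P := idem_compl f_PP
  have f_1Q1Q : (1-Q)*(1-Q) = 1-Q := idem_compl f_QQ
  have f_Pq : P*(1-Q) = P := by rw [mul_sub, mul_one, f_PQ, sub_zero]
  have f_Aq : A*(1-Q) = A := by rw [mul_sub, mul_one, f_AQ, sub_zero]
  have f_1PB : (1-P)*B = B := by rw [sub_mul, one_mul, f_PB, sub_zero]
  -- commute combinations
  have cA1P : Commute A (1-P) := (Commute.one_right A).sub_right cPA.symm
  have cPWA : Commute P (A^2 - P) := (cPA.pow_right 2).sub_right (Commute.refl P)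
  have cAWA : Commute A (A^2 - P) := ((Commute.refl A).pow_right 2).sub_right cPA.symm
  have cWA1P : Commute (A^2-P) (1-P) := (Commute.one_right _).sub_right cPWA.symm
  have cB1Q : Commute B (1-Q) := (Commute.one_right B).sub_right cQB.symm
  have cQWB : Commute Q (B^2 - Q) := (cQB.pow_right 2).sub_right (Commute.refl Q)
  have cBWB : Commute B (B^2 - Q) := ((Commute.refl B).pow_right 2).sub_right cQB.symm
  have cWB1Q : Commute (B^2-Q) (1-Q) := (Commute.one_right _).sub_right cQWB.symm
  -- nilpotency of A*(1-P)
  have step2A : (A*(1-P))*(A*(1-P)) = (A^2-P)*(1-P) := by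
    calc (A*(1-P))*(A*(1-P)) = A*(((1-P)*A)*(1-P)) := by simp only [mul_assoc]
      _ = A*((A*(1-P))*(1-P)) := by rw [cA1P.symm.eq]
      _ = (A*A)*((1-P)*(1-P)) := by simp only [mul_assoc]
      _ = (A*A)*(1-P) := by rw [f_1P1P]
      _ = (A^2)*(1-P) := by rw [← pow_two]
      _ = (A^2-P)*(1-P) := by
          have e : (A^2)*(1-P) - (A^2-P)*(1-P) = P*(1-P) := by noncomm_ring
          rw [f_P1P] at e
          exact sub_eq_zero.mp e
  have nNA : IsNilpotent (A*(1-P)) := by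
    obtain ⟨k, hk⟩ := nWA
    refine ⟨2*k, ?_⟩
    rw [pow_mul, pow_two, step2A, cWA1P.mul_pow, hk, zero_mul]
  have step2B : (B*(1-Q))*(B*(1-Q)) = (B^2-Q)*(1-Q) := by
    calc (B*(1-Q))*(B*(1-Q)) = B*(((1-Q)*B)*(1-Q)) := by simp only [mul_assoc]
      _ = B*((B*(1-Q))*(1-Q)) := by rw [cB1Q.symm.eq]
      _ = (B*B)*((1-Q)*(1-Q)) := by simp only [mul_assoc]
      _ = (B*B)*(1-Q) := by rw [f_1Q1Q]
      _ = (B^2)*(1-Q) := by rw [← pow_two]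
      _ = (B^2-Q)*(1-Q) := by
          have e : (B^2)*(1-Q) - (B^2-Q)*(1-Q) = Q*(1-Q) := by noncomm_ring
          rw [f_Q1Q] at e
          exact sub_eq_zero.mp e
  have nNB : IsNilpotent (B*(1-Q)) := by
    obtain ⟨k, hk⟩ := nWB
    refine ⟨2*k, ?_⟩
    rw [pow_mul, pow_two, step2B, cWB1Q.mul_pow, hk, zero_mul]
  -- A - A^3 and B - B^3 nilpotent
  have nA3 : IsNilpotent (A - A^3) := by
    have idA3 : A - A^3 = A*(1-P) - A*(A^2-P) := by noncomm_ring
    rw [idA3]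
    have c1 : Commute A (A*(A^2-P)) := (Commute.refl A).mul_right cAWA
    have c2 : Commute (1-P) (A*(A^2-P)) := (cA1P.symm).mul_right (cWA1P.symm)
    exact (Commute.mul_left c1 c2).isNilpotent_sub nNA (cAWA.isNilpotent_mul_left nWA)
  have nB3 : IsNilpotent (B - B^3) := by
    have idB3 : B - B^3 = B*(1-Q) - B*(B^2-Q) := by noncomm_ring
    rw [idB3]
    have c1 : Commute B (B*(B^2-Q)) := (Commute.refl B).mul_right cBWB
    have c2 : Commute (1-Q) (B*(B^2-Q)) := (cB1Q.symm).mul_right (cWB1Q.symm)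
    exact (Commute.mul_left c1 c2).isNilpotent_sub nNB (cBWB.isNilpotent_mul_left nWB)
  have f_QBQ : Q*(B*Q) = B*Q := by rw [← mul_assoc, f_QB, mul_assoc, f_QQ]
  -- outer triangular decomposition along Q
  apply triCube f_QQ
  · -- (1-Q)*(A+B)*Q = 0
    have expand : (1-Q)*(A+B)*Q = A*Q + B*Q - Q*(A*Q) - Q*(B*Q) := by noncomm_ring
    rw [expand, f_AQ, mul_zero, f_QBQ]
    abel
  · -- corner Q
    have idQTQ : Q*(A+B)*Q = B*Q := by
      have expand : Q*(A+B)*Q = Q*(A*Q) + Q*(B*Q) := by noncomm_ring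
      rw [expand, f_AQ, mul_zero, f_QBQ, zero_add]
    rw [idQTQ]
    have hBQ3 : (B*Q)^3 = B^3*Q := by
      rw [cQB.symm.mul_pow]
      have hQ3 : Q^3 = Q := by rw [pow_succ, pow_two, f_QQ, f_QQ]
      rw [hQ3]
    have e : B*Q - B^3*Q = (B-B^3)*Q := by noncomm_ring
    rw [hBQ3, e]
    exact (Commute.sub_left cQB.symm ((cQB.symm).pow_left 3)).isNilpotent_mul_right nB3
  · -- corner 1-Q : inner decomposition along p = (1-Q)*P
    have idC : (1-Q)*(A+B)*(1-Q) = (1-Q)*A + B*(1-Q) := by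
      have expand : (1-Q)*(A+B)*(1-Q) = (1-Q)*(A*(1-Q)) + ((1-Q)*B)*(1-Q) := by
        noncomm_ring
      rw [expand, f_Aq, cB1Q.symm.eq, mul_assoc, f_1Q1Q]
    rw [idC]
    have f_pp : ((1-Q)*P)*((1-Q)*P) = (1-Q)*P := by
      calc ((1-Q)*P)*((1-Q)*P) = (1-Q)*((P*(1-Q))*P) := by simp only [mul_assoc]
        _ = (1-Q)*(P*P) := by rw [f_Pq]
        _ = (1-Q)*P := by rw [f_PP]
    have f_pC : ((1-Q)*P) * ((1-Q)*A + B*(1-Q)) = (1-Q)*(A*P) := by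
      have expand : ((1-Q)*P) * ((1-Q)*A + B*(1-Q))
          = (1-Q)*((P*(1-Q))*A) + (1-Q)*((P*B)*(1-Q)) := by noncomm_ring
      rw [expand, f_Pq, f_PB, zero_mul, mul_zero, add_zero, f_PA]
    have f_Cp : ((1-Q)*A + B*(1-Q))*((1-Q)*P) = (1-Q)*(A*P) + B*((1-Q)*P) := by
      have expand : ((1-Q)*A + B*(1-Q))*((1-Q)*P)
          = (1-Q)*((A*(1-Q))*P) + B*(((1-Q)*(1-Q))*P) := by noncomm_ring
      rw [expand, f_Aq, f_1Q1Q]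
    apply triCube (E := 1 - (1-Q)*P) (idem_compl f_pp)
    · -- (1 - (1 - p)) * C * (1 - p) = 0
      rw [sub_sub_cancel]
      calc ((1-Q)*P) * ((1-Q)*A + B*(1-Q)) * (1 - (1-Q)*P)
          = ((1-Q)*(A*P)) * (1 - (1-Q)*P) := by conv_lhs => rw [f_pC]
        _ = (1-Q)*(A*P) - (1-Q)*(A*((P*(1-Q))*P)) := by noncomm_ring
        _ = 0 := by rw [f_Pq, f_PP, sub_self]
    · -- G part
      have idG : (1 - (1-Q)*P) * ((1-Q)*A + B*(1-Q)) * (1 - (1-Q)*P)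
          = (1-Q)*(A*(1-P)) + (B*(1-Q))*(1-P) := by
        have expand : (1 - (1-Q)*P) * ((1-Q)*A + B*(1-Q)) * (1 - (1-Q)*P)
            = ((1-Q)*A + B*(1-Q))
              - (((1-Q)*P) * ((1-Q)*A + B*(1-Q)))
              - (((1-Q)*A + B*(1-Q))*((1-Q)*P))
              + (((1-Q)*P) * ((1-Q)*A + B*(1-Q)))*((1-Q)*P) := by noncomm_ring
        rw [expand, f_pC, f_Cp]
        have f_D0p : ((1-Q)*(A*P))*((1-Q)*P) = (1-Q)*(A*P) := by
          calc ((1-Q)*(A*P))*((1-Q)*P) = (1-Q)*(A*((P*(1-Q))*P)) := by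
                simp only [mul_assoc]
            _ = (1-Q)*(A*P) := by rw [f_Pq, f_PP]
        rw [f_D0p]
        noncomm_ring
      rw [idG]
      -- u := (1-Q)*(A*(1-P)), v := (B*(1-Q))*(1-P)
      have f_xq : (A*(1-P))*(1-Q) = A*(1-P) := by
        have e : (A*(1-P))*(1-Q) = A*(1-Q) - A*(P*(1-Q)) := by noncomm_ring
        rw [f_Aq, f_Pq] at e
        rw [e]; noncomm_ring
      have nu : IsNilpotent ((1-Q)*(A*(1-P))) := by
        obtain ⟨k, hk⟩ := nNA
        exact ⟨k+1, by rw [pow_q_mul f_xq k, pow_succ, hk, zero_mul, mul_zero]⟩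
      have f_1Pv : (1-P)*(B*(1-Q)) = B*(1-Q) := by
        have e : (1-P)*(B*(1-Q)) = B*(1-Q) - (P*B)*(1-Q) := by noncomm_ring
        rw [f_PB, zero_mul, sub_zero] at e
        exact e
      have nv : IsNilpotent ((B*(1-Q))*(1-P)) := by
        obtain ⟨k, hk⟩ := nNB
        exact ⟨k+1, by rw [pow_mul_q f_1Pv k, pow_succ, hk, zero_mul, zero_mul]⟩
      have f_qABP : (1-Q)*A*B = ((1-Q)*A*B)*P := by
        have e : (1-Q)*A*B - ((1-Q)*A*B)*P = (1-Q)*A*B*(1-P) := by noncomm_ring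
        rw [h3] at e
        exact sub_eq_zero.mp e
      have huv : ((1-Q)*(A*(1-P))) * ((B*(1-Q))*(1-P)) = 0 := by
        calc ((1-Q)*(A*(1-P))) * ((B*(1-Q))*(1-P))
            = (1-Q)*(A*(((1-P)*(B*(1-Q)))*(1-P))) := by simp only [mul_assoc]
          _ = (1-Q)*(A*((B*(1-Q))*(1-P))) := by rw [f_1Pv]
          _ = ((1-Q)*A*B)*((1-Q)*(1-P)) := by simp only [mul_assoc]
          _ = (((1-Q)*A*B)*P)*((1-Q)*(1-P)) := by conv_lhs => rw [f_qABP]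
          _ = ((1-Q)*A*B)*((P*(1-Q))*(1-P)) := by simp only [mul_assoc]
          _ = ((1-Q)*A*B)*(P*(1-P)) := by rw [f_Pq]
          _ = 0 := by rw [f_P1P, mul_zero]
      exact nil_sub_cube (nil_add_of_mul_eq_zero huv nu nv)
    · -- D part
      rw [sub_sub_cancel]
      have f_pCp : ((1-Q)*P) * ((1-Q)*A + B*(1-Q)) * ((1-Q)*P) = (1-Q)*(A*P) := by
        calc ((1-Q)*P) * ((1-Q)*A + B*(1-Q)) * ((1-Q)*P)
            = ((1-Q)*(A*P))*((1-Q)*P) := by conv_lhs => rw [f_pC]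
          _ = (1-Q)*(A*((P*(1-Q))*P)) := by simp only [mul_assoc]
          _ = (1-Q)*(A*P) := by rw [f_Pq, f_PP]
      rw [f_pCp]
      have Dpow : ∀ n : ℕ, ((1-Q)*(A*P))^(n+1) = (1-Q)*(A^(n+1)*P) := by
        intro n
        induction n with
        | zero => simp
        | succ n ih =>
          calc ((1-Q)*(A*P))^(n+1+1) = ((1-Q)*(A*P))^(n+1) * ((1-Q)*(A*P)) := by
                rw [pow_succ]
            _ = ((1-Q)*(A^(n+1)*P))*((1-Q)*(A*P)) := by rw [ih]
            _ = (1-Q)*(A^(n+1)*((P*(1-Q))*(A*P))) := by simp only [mul_assoc]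
            _ = (1-Q)*(A^(n+1)*(P*(A*P))) := by rw [f_Pq]
            _ = (1-Q)*(A^(n+1)*((P*A)*P)) := by simp only [mul_assoc]
            _ = (1-Q)*(A^(n+1)*((A*P)*P)) := by rw [f_PA]
            _ = (1-Q)*((A^(n+1)*A)*(P*P)) := by simp only [mul_assoc]
            _ = (1-Q)*(A^(n+1+1)*P) := by rw [← pow_succ, f_PP]
      have d3 : ((1-Q)*(A*P))^3 = (1-Q)*(A^3*P) := Dpow 2
      have idD : (1-Q)*(A*P) - ((1-Q)*(A*P))^3 = (1-Q)*((A - A^3)*P) := by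
        rw [d3]; noncomm_ring
      rw [idD]
      obtain ⟨k, hk⟩ := nA3
      refine ⟨k+1, ?_⟩
      have f_MPq : ((A-A^3)*P)*(1-Q) = (A-A^3)*P := by rw [mul_assoc, f_Pq]
      rw [pow_q_mul f_MPq k]
      have cMP : Commute (A-A^3) P := Commute.sub_left cPA.symm ((cPA.symm).pow_left 3)
      rw [cMP.mul_pow, pow_succ, hk, zero_mul, zero_mul, mul_zero]

end RingLemmas


variable {X : Type*} [NormedAddCommGroup X] [NormedSpace ℂ X] [CompleteSpace X]

theorem hirano_add_perturb (A B AH BH : X →L[ℂ] X)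
    (hAH : A * AH = AH * A ∧ AH = AH * A * AH ∧ IsNilpotent (A ^ 2 - A * AH))
    (hBH : B * BH = BH * B ∧ BH = BH * B * BH ∧ IsNilpotent (B ^ 2 - B * BH))
    (h1 : AH * B = 0)
    (h2 : A * BH = 0)
    (h3 : (1 - B * BH) * A * B * (1 - A * AH) = 0) :
    HasHiranoInverse (A + B) := by
  exact hh (main_ring A B AH BH hAH hBH h1 h2 h3)
end
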